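/- arXiv:2005.01337 — 5 statements merged into one kernel-verified Lean document; each statement's English description precedes it below -/
import Mathlib

section
/- Let k ≥ 1 be an integer and λ > 0. Let N be a random variable with the Poisson distribution of parameter kλ, and let (X_i)_{i≥1} be i.i.d. random variables uniformly distributed on {1,…,k}, with N and the X_i mutually independent. Then for every n ∈ ℕ, ℙ[∑_{i=1}^{N} X_i = n] = ∑ e^{−kλ} λ^{x_1+⋯+x_k} / (x_1!·x_2!⋯x_k!), where the sum is over all non-negative integers x_1,…,x_k with x_1 + 2x_2 + ⋯ + k·x_k = n. (That is, the Poisson process of order k has the Poisson-of-order-k marginal distribution.) -/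
open MeasureTheory ProbabilityTheory
open scoped ENNReal NNReal

lemma aux_count (k m n : ℕ) :
    ((Finset.univ.filter (fun v : Fin m → Fin k => ∑ i, ((v i : ℕ) + 1) = n)).card)
      = ∑ x ∈ (Finset.piAntidiag (Finset.univ : Finset (Fin k)) m).filter
          (fun x : Fin k → ℕ => ∑ j : Fin k, ((j : ℕ) + 1) * x j = n),
          Nat.multinomial Finset.univ x := by
  have hpoly : (∑ j : Fin k, (Polynomial.X : Polynomial ℕ) ^ ((j : ℕ) + 1)) ^ m
      = (∑ j : Fin k, (Polynomial.X : Polynomial ℕ) ^ ((j : ℕ) + 1)) ^ m := rfl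
  have h1 : (∑ j : Fin k, (Polynomial.X : Polynomial ℕ) ^ ((j : ℕ) + 1)) ^ m
      = ∑ v : Fin m → Fin k, Polynomial.X ^ (∑ i, ((v i : ℕ) + 1)) := by
    rw [Fintype.sum_pow]
    exact Fintype.sum_congr _ _ fun v => by rw [Finset.prod_pow_eq_pow_sum]
  have h2 : (∑ j : Fin k, (Polynomial.X : Polynomial ℕ) ^ ((j : ℕ) + 1)) ^ m
      = ∑ x ∈ Finset.piAntidiag (Finset.univ : Finset (Fin k)) m,
          (Nat.multinomial Finset.univ x : Polynomial ℕ)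
            * Polynomial.X ^ (∑ j : Fin k, ((j : ℕ) + 1) * x j) := by
    rw [Finset.sum_pow_eq_sum_piAntidiag]
    refine Finset.sum_congr rfl fun x hx => ?_
    congr 1
    rw [← Finset.prod_pow_eq_pow_sum]
    exact Finset.prod_congr rfl fun j _ => by rw [← pow_mul]
  have := congrArg (fun p : Polynomial ℕ => p.coeff n) (h1.symm.trans h2)
  simp only [Polynomial.finset_sum_coeff, Polynomial.coeff_X_pow] at this
  have hl : ∑ v : Fin m → Fin k, (if n = ∑ i, ((v i : ℕ) + 1) then (1:ℕ) else 0)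
      = (Finset.univ.filter (fun v : Fin m → Fin k => ∑ i, ((v i : ℕ) + 1) = n)).card := by
    rw [Finset.card_filter]
    exact Finset.sum_congr rfl fun v _ => by simp [eq_comm]
  have hr : ∑ x ∈ Finset.piAntidiag (Finset.univ : Finset (Fin k)) m,
      ((Nat.multinomial Finset.univ x : Polynomial ℕ)
        * Polynomial.X ^ (∑ j : Fin k, ((j : ℕ) + 1) * x j)).coeff n
      = ∑ x ∈ (Finset.piAntidiag (Finset.univ : Finset (Fin k)) m).filter
          (fun x : Fin k → ℕ => ∑ j : Fin k, ((j : ℕ) + 1) * x j = n),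
          Nat.multinomial Finset.univ x := by
    rw [Finset.sum_filter]
    refine Finset.sum_congr rfl fun x _ => ?_
    rw [← Polynomial.C_eq_natCast, Polynomial.coeff_C_mul, Polynomial.coeff_X_pow]
    by_cases h : ∑ j : Fin k, ((j : ℕ) + 1) * x j = n
    · simp [h]
    · simp [h, Ne.symm h]
  rw [hl] at this
  rw [this, ← hr]


lemma aux_bij (k m n : ℕ) :
    ((Finset.piAntidiag (Finset.range m) n).filter
        (fun w : ℕ → ℕ => ∀ i ∈ Finset.range m, 1 ≤ w i ∧ w i ≤ k)).card
      = (Finset.univ.filter (fun v : Fin m → Fin k => ∑ i, ((v i : ℕ) + 1) = n)).card := by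
  refine Finset.card_bij'
    (fun w hw => fun idx : Fin m =>
      (⟨w idx - 1, by
        simp only [Finset.mem_filter, Finset.mem_piAntidiag] at hw
        have := hw.2 idx (Finset.mem_range.2 idx.2)
        omega⟩ : Fin k))
    (fun v hv => fun i => if h : i < m then (v ⟨i, h⟩ : ℕ) + 1 else 0)
    ?_ ?_ ?_ ?_
  · intro w hw
    simp only [Finset.mem_filter, Finset.mem_piAntidiag] at hw ⊢
    refine ⟨Finset.mem_univ _, ?_⟩
    have hsum : ∑ i : Fin m, ((w i - 1 : ℕ) + 1) = ∑ i : Fin m, w i := by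
      refine Finset.sum_congr rfl fun i _ => ?_
      have := hw.2 i (Finset.mem_range.2 i.2)
      omega
    rw [hsum, Fin.sum_univ_eq_sum_range (fun i => w i), hw.1.1]
  · intro v hv
    simp only [Finset.mem_filter, Finset.mem_piAntidiag, Finset.mem_univ, true_and] at hv ⊢
    refine ⟨⟨?_, ?_⟩, ?_⟩
    · rw [← hv, ← Fin.sum_univ_eq_sum_range (fun i => if h : i < m then (v ⟨i, h⟩ : ℕ) + 1 else 0)]
      exact Finset.sum_congr rfl fun i _ => by simp [i.2]
    · intro i hi
      rw [Finset.mem_range]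
      by_contra h
      simp [h] at hi
    · intro i hi
      rw [Finset.mem_range] at hi
      simp only [hi, dif_pos]
      exact ⟨Nat.le_add_left _ _, Nat.succ_le_of_lt (v ⟨i, hi⟩).2⟩
  · intro w hw
    funext i
    simp only [Finset.mem_filter, Finset.mem_piAntidiag] at hw
    by_cases h : i < m
    · simp only [h, dif_pos]
      have := hw.2 i (Finset.mem_range.2 h)
      omega
    · simp only [h, dif_neg, not_false_iff]
      by_contra hne
      exact h (Finset.mem_range.1 (hw.1.2 i (Ne.symm hne)))
  · intro v hv
    funext idx
    apply Fin.ext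
    simp [idx.2]

open scoped ENNReal NNReal

/-- **Poisson process of order k has the Poisson-of-order-k marginal.**
Let `N` be Poisson with parameter `k * lam`, and `(X i)` i.i.d. uniform on `{1, …, k}`,
with `N` and the `X i` mutually independent.  Then for every `n : ℕ`,
`ℙ[∑_{i<N} X i = n] = ∑_{x₁,…,x_k ≥ 0, x₁+2x₂+⋯+k x_k = n}
    e^{-k lam} lam^{x₁+⋯+x_k} / (x₁! ⋯ x_k!)`. -/
theorem ppok_marginal_distribution
    {Ω : Type*} [MeasurableSpace Ω] (P : Measure Ω) [IsProbabilityMeasure P]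
    (k : ℕ) (hk : 1 ≤ k) (lam : ℝ) (hlam : 0 < lam)
    (N : Ω → ℕ) (X : ℕ → Ω → ℕ)
    (hNmeas : Measurable N) (hXmeas : ∀ i, Measurable (X i))
    -- `N` is Poisson distributed with parameter `k * lam`
    (hNdist : ∀ n : ℕ, P {ω | N ω = n}
      = ENNReal.ofReal (Real.exp (-((k : ℝ) * lam)) * ((k : ℝ) * lam) ^ n
          / (Nat.factorial n : ℝ)))
    -- each `X i` is uniformly distributed on `{1, …, k}`
    (hXdist : ∀ i, ∀ m : ℕ,
      P {ω | X i ω = m} = if 1 ≤ m ∧ m ≤ k then ((k : ℝ≥0∞))⁻¹ else 0)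
    -- `N, X 0, X 1, …` are mutually independent (in particular the `X i` are independent,
    -- and together with `hXdist` they are i.i.d.)
    (hindep : iIndepFun
      (fun i : Option ℕ => Option.elim i N X) P) :
    ∀ n : ℕ,
      P {ω | (∑ i ∈ Finset.range (N ω), X i ω) = n}
        = ∑' x : {x : Fin k → ℕ // (∑ j, (j.1 + 1) * x j) = n},
            ENNReal.ofReal (Real.exp (-((k : ℝ) * lam)) * lam ^ (∑ j, x.1 j)
              / ((∏ j, Nat.factorial (x.1 j) : ℕ) : ℝ)) := by
  classical
  intro n
  set e : ℝ := Real.exp (-((k : ℝ) * lam)) with he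
  -- measurability
  have hNm : ∀ m : ℕ, MeasurableSet {ω | N ω = m} := fun m =>
    hNmeas (measurableSet_singleton m)
  have hSmeas : ∀ m : ℕ, MeasurableSet {ω | ∑ i ∈ Finset.range m, X i ω = n} := by
    intro m
    have : Measurable fun ω => ∑ i ∈ Finset.range m, X i ω :=
      Finset.measurable_sum _ fun i _ => hXmeas i
    exact this (measurableSet_singleton n)
  -- Step 1 : decompose over the value of N
  have hdecomp : P {ω | (∑ i ∈ Finset.range (N ω), X i ω) = n}
      = ∑' m : ℕ, P ({ω | N ω = m} ∩ {ω | ∑ i ∈ Finset.range m, X i ω = n}) := by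
    have hset : {ω | (∑ i ∈ Finset.range (N ω), X i ω) = n}
        = ⋃ m : ℕ, ({ω | N ω = m} ∩ {ω | ∑ i ∈ Finset.range m, X i ω = n}) := by
      ext ω
      simp only [Set.mem_setOf_eq, Set.mem_iUnion, Set.mem_inter_iff]
      constructor
      · intro h; exact ⟨N ω, rfl, h⟩
      · rintro ⟨m, hm, h⟩; subst hm; exact h
    rw [hset]
    refine measure_iUnion ?_ fun m => (hNm m).inter (hSmeas m)
    intro i j hij
    refine Set.disjoint_left.2 fun ω hωi hωj => ?_
    exact hij (hωi.1.symm.trans hωj.1)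
  -- Step 2 : independence factorization for each m
  have hper : ∀ m : ℕ, P ({ω | N ω = m} ∩ {ω | ∑ i ∈ Finset.range m, X i ω = n})
      = P {ω | N ω = m} * ∑ w ∈ Finset.piAntidiag (Finset.range m) n,
          ∏ i ∈ Finset.range m, P {ω | X i ω = w i} := by
    intro m
    have hEdec : {ω | ∑ i ∈ Finset.range m, X i ω = n}
        = ⋃ w ∈ Finset.piAntidiag (Finset.range m) n,
            ⋂ i ∈ Finset.range m, {ω | X i ω = w i} := by
      ext ω
      simp only [Set.mem_setOf_eq, Set.mem_iUnion, Set.mem_iInter, Finset.mem_piAntidiag]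
      constructor
      · intro h
        refine ⟨fun i => if i ∈ Finset.range m then X i ω else 0, ⟨?_, ?_⟩, ?_⟩
        · rw [← h]
          exact Finset.sum_congr rfl fun i hi => if_pos hi
        · intro i hi
          by_contra hmem
          simp [hmem] at hi
        · intro i hi
          simp [hi]
      · rintro ⟨w, ⟨hsum, _⟩, hw⟩
        rw [← hsum]
        exact Finset.sum_congr rfl fun i hi => hw i hi
    have hinter : {ω | N ω = m} ∩ {ω | ∑ i ∈ Finset.range m, X i ω = n}
        = ⋃ w ∈ Finset.piAntidiag (Finset.range m) n,
            ({ω | N ω = m} ∩ ⋂ i ∈ Finset.range m, {ω | X i ω = w i}) := by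
      rw [hEdec, Set.inter_iUnion₂]
    rw [hinter, measure_biUnion_finset ?disj ?meas, Finset.mul_sum]
    case disj =>
      intro w hw w' hw' hne
      simp only [Finset.coe_sort_coe, Finset.mem_coe, Finset.mem_piAntidiag] at hw hw'
      obtain ⟨i, hi⟩ := Function.ne_iff.1 hne
      have him : i ∈ Finset.range m := by
        by_contra hmem
        have e1 : w i = 0 := by
          by_contra h0; exact hmem (hw.2 i h0)
        have e2 : w' i = 0 := by
          by_contra h0; exact hmem (hw'.2 i h0)
        exact hi (e1.trans e2.symm)
      refine Set.disjoint_left.2 fun ω hω1 hω2 => ?_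
      have h1 : X i ω = w i := by
        have := hω1.2
        simp only [Set.mem_iInter] at this
        exact this i him
      have h2 : X i ω = w' i := by
        have := hω2.2
        simp only [Set.mem_iInter] at this
        exact this i him
      exact hi (h1 ▸ h2 ▸ rfl)
    case meas =>
      intro w hw
      refine (hNm m).inter (Set.Finite.measurableSet_biInter (Finset.finite_toSet _)
        fun i _ => (hXmeas i) (measurableSet_singleton (w i)))
    refine Finset.sum_congr rfl fun w hw => ?_
    have key := hindep.measure_inter_preimage_eq_mul
      (S := insert none ((Finset.range m).image some))
      (sets := fun o => Option.elim o {m} (fun i => {w i}))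
      (fun i _ => by cases i <;> exact measurableSet_singleton _)
    have hnone : (none : Option ℕ) ∉ (Finset.range m).image some := by simp
    rw [Finset.set_biInter_insert, Finset.prod_insert hnone,
      Finset.set_biInter_finset_image, Finset.prod_image
        (fun x _ y _ h => Option.some.inj h)] at key
    exact key
    -- Step 3 : evaluate the inner sum using the uniform distribution
  have hQ : ∀ m : ℕ, (∑ w ∈ Finset.piAntidiag (Finset.range m) n,
        ∏ i ∈ Finset.range m, P {ω | X i ω = w i})
      = (((Finset.univ.filter
            (fun v : Fin m → Fin k => ∑ i, ((v i : ℕ) + 1) = n)).card : ℝ≥0∞))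
          * ((k : ℝ≥0∞))⁻¹ ^ m := by
    intro m
    have hprod : ∀ w ∈ Finset.piAntidiag (Finset.range m) n,
        (∏ i ∈ Finset.range m, P {ω | X i ω = w i})
        = if (∀ i ∈ Finset.range m, 1 ≤ w i ∧ w i ≤ k)
            then ((k : ℝ≥0∞))⁻¹ ^ m else 0 := by
      intro w _
      rw [Finset.prod_congr rfl (fun i _ => hXdist i (w i)), Finset.prod_ite_zero,
        Finset.prod_const, Finset.card_range]
    rw [Finset.sum_congr rfl hprod, ← Finset.sum_filter, Finset.sum_const,
      aux_bij k m n, nsmul_eq_mul]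
  -- Step 4 : per-m closed form
  have hterm : ∀ m : ℕ,
      P ({ω | N ω = m} ∩ {ω | ∑ i ∈ Finset.range m, X i ω = n})
      = ∑ x ∈ (Finset.piAntidiag (Finset.univ : Finset (Fin k)) m).filter
            (fun x : Fin k → ℕ => ∑ j : Fin k, ((j : ℕ) + 1) * x j = n),
          ENNReal.ofReal (e * lam ^ (∑ j, x j)
            / ((∏ j, Nat.factorial (x j) : ℕ) : ℝ)) := by
    intro m
    have hk0 : (0:ℝ) < (k : ℝ) := by
      have : 0 < k := hk
      exact_mod_cast this
    rw [hper m, hQ m, hNdist m, aux_count k m n, Nat.cast_sum, Finset.sum_mul,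
      Finset.mul_sum]
    refine Finset.sum_congr rfl fun x hx => ?_
    simp only [Finset.mem_filter, Finset.mem_piAntidiag] at hx
    obtain ⟨⟨hxm, -⟩, hxn⟩ := hx
    have hprod0 : (0:ℝ) < ((∏ j, Nat.factorial (x j) : ℕ) : ℝ) := by
      have : 0 < ∏ j, Nat.factorial (x j) :=
        Finset.prod_pos fun j _ => Nat.factorial_pos _
      exact_mod_cast this
    have hmult : ((∏ j, Nat.factorial (x j) : ℕ) : ℝ)
        * (Nat.multinomial Finset.univ x : ℝ) = (Nat.factorial m : ℝ) := by
      have := Nat.multinomial_spec (Finset.univ : Finset (Fin k)) x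
      rw [hxm] at this
      exact_mod_cast this
    have hfac0 : ((Nat.factorial m : ℕ) : ℝ) ≠ 0 := by
      exact_mod_cast (Nat.factorial_pos m).ne'
    have hxsum : (∑ j, x j) = m := hxm
    have hreal : (Nat.multinomial Finset.univ x : ℝ)
        * (e * ((k : ℝ) * lam) ^ m / (Nat.factorial m : ℝ) * (((k:ℝ))⁻¹) ^ m)
        = e * lam ^ (∑ j, x j) / ((∏ j, Nat.factorial (x j) : ℕ) : ℝ) := by
      have hkk : (k:ℝ) ^ m * ((k:ℝ)⁻¹) ^ m = 1 := by
        rw [← mul_pow, mul_inv_cancel₀ hk0.ne', one_pow]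
      rw [hxsum]
      field_simp
      push_cast at hmult ⊢
      linear_combination (e * (k:ℝ) ^ m * lam ^ m * ((k:ℝ)⁻¹) ^ m) * hmult
        + (e * lam ^ m * (Nat.factorial m : ℝ)) * hkk
    have he0 : (0:ℝ) ≤ e := le_of_lt (by rw [he]; exact Real.exp_pos _)
    have hA0 : (0:ℝ) ≤ e * ((k : ℝ) * lam) ^ m / (Nat.factorial m : ℝ) :=
      div_nonneg (mul_nonneg he0 (pow_nonneg (mul_nonneg hk0.le hlam.le) m))
        (Nat.cast_nonneg _)
    rw [← ENNReal.ofReal_natCast (Nat.multinomial Finset.univ x),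
      ← ENNReal.ofReal_natCast k, ← ENNReal.ofReal_inv_of_pos hk0,
      ← ENNReal.ofReal_pow (inv_nonneg.2 hk0.le),
      ← ENNReal.ofReal_mul (by positivity : (0:ℝ) ≤ (Nat.multinomial Finset.univ x : ℝ)),
      ← ENNReal.ofReal_mul hA0]
    exact congrArg ENNReal.ofReal (by linear_combination hreal)
  -- Step 5 : regroup the double sum
  rw [hdecomp, tsum_congr hterm]
  have hbound : ∀ (x : Fin k → ℕ), (∑ j : Fin k, ((j:ℕ) + 1) * x j = n) →
      ∀ j, x j ≤ n := by
    intro x hw j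
    calc x j ≤ ((j:ℕ) + 1) * x j := Nat.le_mul_of_pos_left _ (Nat.succ_pos _)
      _ ≤ ∑ j : Fin k, ((j : ℕ) + 1) * x j :=
          Finset.single_le_sum (f := fun j : Fin k => ((j:ℕ) + 1) * x j)
            (fun j _ => Nat.zero_le _) (Finset.mem_univ j)
      _ = n := hw
  have hvanish : ∀ m ∉ Finset.range (n+1),
      (∑ x ∈ (Finset.piAntidiag (Finset.univ : Finset (Fin k)) m).filter
            (fun x : Fin k → ℕ => ∑ j : Fin k, ((j : ℕ) + 1) * x j = n),
          ENNReal.ofReal (e * lam ^ (∑ j, x j)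
            / ((∏ j, Nat.factorial (x j) : ℕ) : ℝ))) = 0 := by
    intro m hm
    rw [Finset.mem_range, not_lt] at hm
    have hempty : ((Finset.piAntidiag (Finset.univ : Finset (Fin k)) m).filter
        (fun x : Fin k → ℕ => ∑ j : Fin k, ((j : ℕ) + 1) * x j = n)) = ∅ := by
      refine Finset.eq_empty_of_forall_notMem fun x hx => ?_
      simp only [Finset.mem_filter, Finset.mem_piAntidiag] at hx
      obtain ⟨⟨hxm, -⟩, hxn⟩ := hx
      have : m ≤ n := by
        calc m = ∑ j, x j := hxm.symm
          _ ≤ ∑ j : Fin k, ((j : ℕ) + 1) * x j :=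
            Finset.sum_le_sum fun j _ => Nat.le_mul_of_pos_left _ (Nat.succ_pos _)
          _ = n := hxn
      omega
    rw [hempty, Finset.sum_empty]
  rw [tsum_eq_sum hvanish]
  have hmaps : ∀ x ∈ (Fintype.piFinset (fun _ : Fin k => Finset.range (n+1))).filter
      (fun x : Fin k → ℕ => ∑ j : Fin k, ((j : ℕ) + 1) * x j = n),
      (∑ j, x j) ∈ Finset.range (n+1) := by
    intro x hx
    simp only [Finset.mem_filter] at hx
    rw [Finset.mem_range, Nat.lt_succ_iff, ← hx.2]
    exact Finset.sum_le_sum fun j _ => Nat.le_mul_of_pos_left _ (Nat.succ_pos _)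
  have hfib := Finset.sum_fiberwise_of_maps_to hmaps
    (fun x : Fin k → ℕ => ENNReal.ofReal (e * lam ^ (∑ j, x j)
      / ((∏ j, Nat.factorial (x j) : ℕ) : ℝ)))
  have hgroup : ∑ m ∈ Finset.range (n+1),
      (∑ x ∈ (Finset.piAntidiag (Finset.univ : Finset (Fin k)) m).filter
            (fun x : Fin k → ℕ => ∑ j : Fin k, ((j : ℕ) + 1) * x j = n),
          ENNReal.ofReal (e * lam ^ (∑ j, x j)
            / ((∏ j, Nat.factorial (x j) : ℕ) : ℝ)))
      = ∑ x ∈ (Fintype.piFinset (fun _ : Fin k => Finset.range (n+1))).filter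
            (fun x : Fin k → ℕ => ∑ j : Fin k, ((j : ℕ) + 1) * x j = n),
          ENNReal.ofReal (e * lam ^ (∑ j, x j)
            / ((∏ j, Nat.factorial (x j) : ℕ) : ℝ)) := by
    rw [← hfib]
    refine Finset.sum_congr rfl fun m hm => Finset.sum_congr ?_ fun _ _ => rfl
    ext x
    simp only [Finset.mem_filter, Finset.mem_piAntidiag, Fintype.mem_piFinset,
      Finset.mem_range, Nat.lt_succ_iff, Finset.mem_univ, true_and, implies_true,
      and_true]
    constructor
    · rintro ⟨hs, hw⟩
      exact ⟨⟨fun j => hbound x hw j, hw⟩, hs⟩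
    · rintro ⟨⟨-, hw⟩, hs⟩
      exact ⟨hs, hw⟩
  rw [hgroup]
  -- Step 6 : identify the finite sum with the tsum over the subtype
  have hsub : (∑' x : {x : Fin k → ℕ // (∑ j : Fin k, ((j : ℕ) + 1) * x j) = n},
      ENNReal.ofReal (e * lam ^ (∑ j, x.1 j)
        / ((∏ j, Nat.factorial (x.1 j) : ℕ) : ℝ)))
      = ∑' (y : Fin k → ℕ),
          Set.indicator {x : Fin k → ℕ | (∑ j : Fin k, ((j : ℕ) + 1) * x j) = n}
            (fun x => ENNReal.ofReal (e * lam ^ (∑ j, x j)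
              / ((∏ j, Nat.factorial (x j) : ℕ) : ℝ))) y :=
    _root_.tsum_subtype (s := {x : Fin k → ℕ | (∑ j : Fin k, ((j : ℕ) + 1) * x j) = n})
      (f := fun x : Fin k → ℕ => ENNReal.ofReal (e * lam ^ (∑ j, x j)
        / ((∏ j, Nat.factorial (x j) : ℕ) : ℝ)))
  rw [hsub, tsum_eq_sum (s := (Fintype.piFinset (fun _ : Fin k => Finset.range (n+1))).filter
      (fun x : Fin k → ℕ => ∑ j : Fin k, ((j : ℕ) + 1) * x j = n)) ?h0]
  case h0 =>
    intro x hx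
    by_cases hxn : (∑ j : Fin k, ((j:ℕ) + 1) * x j) = n
    · exfalso
      refine hx (Finset.mem_filter.2 ⟨?_, hxn⟩)
      rw [Fintype.mem_piFinset]
      intro j
      rw [Finset.mem_range, Nat.lt_succ_iff]
      exact hbound x hxn j
    · have hxmem : x ∉ {x : Fin k → ℕ | (∑ j : Fin k, ((j : ℕ) + 1) * x j) = n} := hxn
      exact Set.indicator_of_notMem hxmem
        (fun x : Fin k → ℕ => ENNReal.ofReal (e * lam ^ (∑ j, x j)
          / ((∏ j, Nat.factorial (x j) : ℕ) : ℝ)))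
  refine Finset.sum_congr rfl fun x hx => ?_
  have hxmem : x ∈ {x : Fin k → ℕ | (∑ j : Fin k, ((j : ℕ) + 1) * x j) = n} :=
    (Finset.mem_filter.1 hx).2
  exact (Set.indicator_of_mem hxmem
    (fun x : Fin k → ℕ => ENNReal.ofReal (e * lam ^ (∑ j, x j)
      / ((∏ j, Nat.factorial (x j) : ℕ) : ℝ)))).symm
end

section
/- Let N be Poisson distributed with parameter kλt, let (X_i)_{i≥1} be i.i.d. uniform on {1,…,k}, and let (Y_i)_{i≥1} be i.i.d. square-integrable real random variables, with N, (X_i), (Y_i) mutually independent. Set Z(t) = ∑_{i=1}^{∑_{j=1}^{N} X_j} Y_i. Then Z(t) is square-integrable and Var[Z(t)] = (k(k+1)/2) · λ t · Var(Y_1) + (k(k+1)(2k+1)/6) · λ t · (𝔼[Y_1])². -/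
open MeasureTheory ProbabilityTheory
open scoped ENNReal NNReal

/-- Codomains for the joint family `(N, (X i), (Y i))`. -/
def mixCodom : Unit ⊕ ℕ ⊕ ℕ → Type
  | .inl _ => ℕ
  | .inr (.inl _) => ℕ
  | .inr (.inr _) => ℝ

instance mixCodomMS : ∀ i, MeasurableSpace (mixCodom i)
  | .inl _ => inferInstanceAs (MeasurableSpace ℕ)
  | .inr (.inl _) => inferInstanceAs (MeasurableSpace ℕ)
  | .inr (.inr _) => inferInstanceAs (MeasurableSpace ℝ)

/-- The family consisting of `N`, the `X i` and the `Y i`, viewed as a single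
indexed family of random variables; `iIndepFun` of this family expresses the mutual
independence of `N`, `(X i)_{i}` and `(Y i)_{i}`. -/
def mixFam {Ω : Type*} (N : Ω → ℕ) (X : ℕ → Ω → ℕ) (Y : ℕ → Ω → ℝ) :
    ∀ i : Unit ⊕ ℕ ⊕ ℕ, Ω → mixCodom i
  | .inl _ => N
  | .inr (.inl j) => X j
  | .inr (.inr j) => Y j

-- ===== auxiliary lemmas =====

lemma indep_mono {Ω : Type*} {mΩ : MeasurableSpace Ω} {μ : Measure Ω}
    {m1 m2 m1' m2' : MeasurableSpace Ω}
    (h : Indep m1 m2 μ) (h1 : m1' ≤ m1) (h2 : m2' ≤ m2) : Indep m1' m2' μ := by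
  rw [Indep_iff] at h ⊢
  exact fun t1 t2 ht1 ht2 => h t1 t2 (h1 _ ht1) (h2 _ ht2)

lemma measurable_randSum {Ω : Type*} {mΩ : MeasurableSpace Ω} {N : Ω → ℕ} {X : ℕ → Ω → ℕ}
    (hN : Measurable N) (hX : ∀ j, Measurable (X j)) :
    Measurable (fun ω => ∑ j ∈ Finset.range (N ω), X j ω) := by
  apply measurable_to_countable'
  intro n
  have h : (fun ω => ∑ j ∈ Finset.range (N ω), X j ω) ⁻¹' {n}
      = ⋃ m, ({ω | N ω = m} ∩ {ω | ∑ j ∈ Finset.range m, X j ω = n}) := by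
    ext ω
    simp only [Set.mem_preimage, Set.mem_singleton_iff, Set.mem_iUnion, Set.mem_inter_iff,
      Set.mem_setOf_eq]
    exact ⟨fun h => ⟨N ω, rfl, h⟩, fun ⟨m, h1, h2⟩ => h1 ▸ h2⟩
  rw [h]
  exact MeasurableSet.iUnion fun m =>
    (hN (measurableSet_singleton m)).inter
      ((Finset.measurable_sum _ fun j _ => hX j) (measurableSet_singleton n))

lemma lintegral_comp_nat {Ω : Type*} [MeasurableSpace Ω] {μ : Measure Ω} {W : Ω → ℕ}
    (hW : Measurable W) (g : ℕ → ℝ≥0∞) :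
    ∫⁻ ω, g (W ω) ∂μ = ∑' n, g n * μ {ω | W ω = n} := by
  rw [← lintegral_map (measurable_from_nat (f := g)) hW, lintegral_countable' g]
  congr 1
  ext n
  rw [Measure.map_apply hW (measurableSet_singleton n)]
  rfl


lemma integral_comp_nat {Ω : Type*} [MeasurableSpace Ω] {μ : Measure Ω} {W : Ω → ℕ}
    (hW : Measurable W) {g : ℕ → ℝ} (hint : Integrable (fun ω => g (W ω)) μ) :
    ∫ ω, g (W ω) ∂μ = ∑' n, g n * (μ {ω | W ω = n}).toReal := by
  have hg : Measurable g := measurable_from_nat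
  have hmap : Integrable g (Measure.map W μ) := by
    rw [integrable_map_measure hg.aestronglyMeasurable hW.aemeasurable]
    exact hint
  rw [← integral_map hW.aemeasurable hg.aestronglyMeasurable, integral_countable' hmap]
  congr 1
  ext n
  rw [measureReal_def, Measure.map_apply hW (measurableSet_singleton n)]
  rw [smul_eq_mul, mul_comm]
  rfl

section poisson
variable (mu : ℝ)

lemma exp_series_sum : ∑' n : ℕ, mu ^ n / n.factorial = Real.exp mu := by
  rw [Real.exp_eq_exp_ℝ, NormedSpace.exp_eq_tsum_div]

lemma exp_series_summable : Summable (fun n : ℕ => mu ^ n / n.factorial) :=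
  Real.summable_pow_div_factorial mu

lemma poisson_shift1 (n : ℕ) :
    ((n + 1 : ℕ) : ℝ) * mu ^ (n + 1) / (n + 1).factorial = mu * (mu ^ n / n.factorial) := by
  have h1 : ((n).factorial : ℝ) ≠ 0 := Nat.cast_ne_zero.mpr (Nat.factorial_ne_zero n)
  have h2 : ((n : ℝ) + 1) ≠ 0 := by positivity
  rw [Nat.factorial_succ]
  push_cast
  field_simp
  ring

lemma poisson_summable1 : Summable (fun n : ℕ => (n : ℝ) * mu ^ n / n.factorial) := by
  rw [← summable_nat_add_iff 1]
  have : (fun n : ℕ => ((n + 1 : ℕ) : ℝ) * mu ^ (n + 1) / (n + 1).factorial)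
      = fun n : ℕ => mu * (mu ^ n / n.factorial) := funext (poisson_shift1 mu)
  exact this ▸ (exp_series_summable mu).mul_left mu

lemma poisson_sum1 : ∑' n : ℕ, (n : ℝ) * mu ^ n / n.factorial = mu * Real.exp mu := by
  rw [Summable.tsum_eq_zero_add (poisson_summable1 mu)]
  simp only [poisson_shift1 mu]
  rw [tsum_mul_left, exp_series_sum]
  simp

lemma poisson_shift2 (n : ℕ) :
    ((n + 1 : ℕ) : ℝ) ^ 2 * mu ^ (n + 1) / (n + 1).factorial
      = mu * ((n : ℝ) * mu ^ n / n.factorial) + mu * (mu ^ n / n.factorial) := by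
  have h1 : ((n).factorial : ℝ) ≠ 0 := Nat.cast_ne_zero.mpr (Nat.factorial_ne_zero n)
  have h2 : ((n : ℝ) + 1) ≠ 0 := by positivity
  rw [Nat.factorial_succ]
  push_cast
  field_simp
  ring

lemma poisson_summable2 : Summable (fun n : ℕ => (n : ℝ) ^ 2 * mu ^ n / n.factorial) := by
  rw [← summable_nat_add_iff 1]
  have : (fun n : ℕ => ((n + 1 : ℕ) : ℝ) ^ 2 * mu ^ (n + 1) / (n + 1).factorial)
      = fun n : ℕ => mu * ((n : ℝ) * mu ^ n / n.factorial) + mu * (mu ^ n / n.factorial) :=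
    funext (poisson_shift2 mu)
  rw [this]
  exact (((poisson_summable1 mu).mul_left mu)).add ((exp_series_summable mu).mul_left mu)

lemma poisson_sum2 :
    ∑' n : ℕ, (n : ℝ) ^ 2 * mu ^ n / n.factorial = (mu ^ 2 + mu) * Real.exp mu := by
  rw [Summable.tsum_eq_zero_add (poisson_summable2 mu)]
  simp only [poisson_shift2 mu]
  rw [Summable.tsum_add (((poisson_summable1 mu).mul_left mu)) ((exp_series_summable mu).mul_left mu),
    tsum_mul_left, tsum_mul_left, poisson_sum1, exp_series_sum]
  simp
  ring
end poisson

lemma randsum_moments {Ω : Type*} [MeasurableSpace Ω] (P : Measure Ω) [IsProbabilityMeasure P]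
    (M : Ω → ℕ) (W : ℕ → Ω → ℝ) (hM : Measurable M) (hW : ∀ i, Measurable (W i))
    (hident : ∀ i, IdentDistrib (W i) (W 0) P P)
    (hW2 : MemLp (W 0) 2 P)
    (hWindep : iIndepFun W P)
    (hMS : ∀ n : ℕ, IndepFun M (fun ω => ∑ i ∈ Finset.range n, W i ω) P)
    (hM2 : MemLp (fun ω => (M ω : ℝ)) 2 P) :
    MemLp (fun ω => ∑ i ∈ Finset.range (M ω), W i ω) 2 P ∧
    (∫ ω, ∑ i ∈ Finset.range (M ω), W i ω ∂P)
      = (∫ ω, (M ω : ℝ) ∂P) * (∫ ω, W 0 ω ∂P) ∧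
    variance (fun ω => ∑ i ∈ Finset.range (M ω), W i ω) P
      = (∫ ω, (M ω : ℝ) ∂P) * variance (W 0) P
        + variance (fun ω => (M ω : ℝ)) P * (∫ ω, W 0 ω ∂P) ^ 2 := by
  set S : ℕ → Ω → ℝ := fun n ω => ∑ i ∈ Finset.range n, W i ω with hS
  set Z : Ω → ℝ := fun ω => S (M ω) ω with hZ
  set a : ℝ := ∫ ω, W 0 ω ∂P with ha
  set v : ℝ := variance (W 0) P with hv
  set p : ℕ → ℝ≥0∞ := fun n => P {ω | M ω = n} with hp
  set En : ℕ → Set Ω := fun n => {ω | M ω = n} with hEn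
  have hEnMeas : ∀ n, MeasurableSet (En n) := fun n => hM (measurableSet_singleton n)
  have hEnDisj : Pairwise (Function.onFun Disjoint En) := by
    intro n m hnm
    simp only [Function.onFun, Set.disjoint_left]
    rintro ω (h1 : M ω = n) (h2 : M ω = m)
    exact hnm (h1 ▸ h2 ▸ rfl)
  have hEnUniv : (⋃ n, En n) = Set.univ := by
    ext ω; simp [hEn]
  -- basic facts about the partial sums S n
  have hWi2 : ∀ i, MemLp (W i) 2 P := fun i => (hident i).memLp_iff.mpr hW2
  have hSmem : ∀ n, MemLp (S n) 2 P := by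
    intro n
    have h := memLp_finsetSum' (Finset.range n) (fun i (_ : i ∈ Finset.range n) => hWi2 i)
    have he : (∑ i ∈ Finset.range n, W i) = S n := by funext ω; simp [hS]
    rwa [he] at h
  have hSmeas : ∀ n, Measurable (S n) := fun n => Finset.measurable_sum _ fun i _ => hW i
  have hSint : ∀ n, ∫ ω, S n ω ∂P = n * a := by
    intro n
    rw [hS]
    rw [integral_finset_sum _ (fun i _ => (hWi2 i).integrable one_le_two)]
    rw [Finset.sum_congr rfl (fun i _ => (hident i).integral_eq)]
    simp [mul_comm, ha]
  have hSvar : ∀ n, variance (S n) P = n * v := by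
    intro n
    have h1 : S n = ∑ i ∈ Finset.range n, W i := by
      funext ω; simp [hS]
    rw [h1, IndepFun.variance_sum (fun i _ => hWi2 i)
      (fun i _ j _ hij => hWindep.indepFun hij)]
    rw [Finset.sum_congr rfl (fun i _ => (hident i).variance_eq)]
    simp [mul_comm, hv]
  have hSsq : ∀ n, ∫ ω, (S n ω) ^ 2 ∂P = n * v + (n * a) ^ 2 := by
    intro n
    have := variance_eq_sub (hSmem n)
    rw [hSvar n, hSint n] at this
    have h2 : P[(S n) ^ 2] = ∫ ω, (S n ω) ^ 2 ∂P := by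
      congr 1
    linarith [this, h2]
  -- measurability of Z
  have hZmeas : Measurable Z := by
    have hF : Measurable (fun q : Ω × ℕ => S q.2 q.1) :=
      measurable_from_prod_countable_left fun n => hSmeas n
    exact hF.comp (measurable_id.prodMk hM)
  -- indicator of the event {M = n} as a composition with M
  have hphi : ∀ n : ℕ, (fun ω => (En n).indicator (fun _ => (1 : ℝ≥0∞)) ω)
      = (fun m : ℕ => ({n} : Set ℕ).indicator (fun _ => (1 : ℝ≥0∞)) m) ∘ M := by
    intro n
    funext ω
    by_cases h : M ω = n <;> simp [hEn, Set.indicator, h]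
  -- the key lintegral partition identity
  have hlint : ∀ (g : ℝ → ℝ≥0∞), Measurable g →
      ∫⁻ ω, g (Z ω) ∂P = ∑' n, p n * ∫⁻ ω, g (S n ω) ∂P := by
    intro g hg
    have h1 : ∫⁻ ω, g (Z ω) ∂P = ∑' n, ∫⁻ ω in En n, g (Z ω) ∂P := by
      rw [← setLIntegral_univ, ← hEnUniv, lintegral_iUnion hEnMeas hEnDisj]
    have h2 : ∀ n, ∫⁻ ω in En n, g (Z ω) ∂P = ∫⁻ ω in En n, g (S n ω) ∂P := by
      intro n
      refine setLIntegral_congr_fun (hEnMeas n) (fun ω hω => ?_)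
      have : M ω = n := hω
      rw [hZ]; simp only [this]
    have h3 : ∀ n, ∫⁻ ω in En n, g (S n ω) ∂P = p n * ∫⁻ ω, g (S n ω) ∂P := by
      intro n
      rw [← lintegral_indicator (hEnMeas n)]
      have heq : (En n).indicator (fun ω => g (S n ω))
          = (fun ω => (En n).indicator (fun _ => (1 : ℝ≥0∞)) ω) * (fun ω => g (S n ω)) := by
        funext ω
        by_cases h : ω ∈ En n <;> simp [Set.indicator, h]
      have hind : IndepFun (fun ω => (En n).indicator (fun _ => (1 : ℝ≥0∞)) ω)
          (fun ω => g (S n ω)) P := by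
        rw [hphi n]
        exact (hMS n).comp (measurable_from_nat) hg
      have hmul := lintegral_mul_eq_lintegral_mul_lintegral_of_indepFun
        (f := fun ω => (En n).indicator (fun _ => (1 : ℝ≥0∞)) ω) (g := fun ω => g (S n ω))
        (μ := P) (measurable_const.indicator (hEnMeas n)) (hg.comp (hSmeas n)) hind
      rw [heq, hmul]
      congr 1
      rw [lintegral_indicator (hEnMeas n)]
      simp
      rfl
    rw [h1]
    exact tsum_congr fun n => (h2 n).trans (h3 n)
  -- finiteness of the first two moments of M, in ℝ≥0∞ form
  have hMint : Integrable (fun ω => (M ω : ℝ)) P := hM2.integrable one_le_two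
  have hM2int : Integrable (fun ω => (M ω : ℝ) ^ 2) P := hM2.integrable_sq
  have hc1 : ∑' n : ℕ, (n : ℝ≥0∞) * p n ≠ ⊤ := by
    have h := lintegral_comp_nat (μ := P) hM (fun n => ((n : ℕ) : ℝ≥0∞))
    have h2 : ∫⁻ ω, ((M ω : ℕ) : ℝ≥0∞) ∂P = ∫⁻ ω, ENNReal.ofReal ((M ω : ℝ)) ∂P := by
      apply lintegral_congr; intro ω; simp [ENNReal.ofReal_natCast]
    have h3 := (hasFiniteIntegral_iff_ofReal
      (ae_of_all _ fun ω => by positivity)).mp hMint.2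
    rw [← h, h2]
    exact h3.ne
  have hc2 : ∑' n : ℕ, (n : ℝ≥0∞) ^ 2 * p n ≠ ⊤ := by
    have h := lintegral_comp_nat (μ := P) hM (fun n => ((n : ℝ≥0∞)) ^ 2)
    have h2 : ∫⁻ ω, ((M ω : ℝ≥0∞)) ^ 2 ∂P = ∫⁻ ω, ENNReal.ofReal ((M ω : ℝ) ^ 2) ∂P := by
      apply lintegral_congr; intro ω
      rw [ENNReal.ofReal_pow (by positivity), ENNReal.ofReal_natCast]
    have h3 := (hasFiniteIntegral_iff_ofReal
      (ae_of_all _ fun ω => by positivity)).mp hM2int.2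
    rw [← h, h2]
    exact h3.ne
  -- lintegral of ofReal (S n ^ 2)
  have hvnn : 0 ≤ v := variance_nonneg _ _
  have hSof : ∀ n : ℕ, ∫⁻ ω, ENNReal.ofReal (S n ω ^ 2) ∂P
      = ENNReal.ofReal ((n : ℝ) * v + ((n : ℝ) * a) ^ 2) := by
    intro n
    rw [← hSsq n]
    exact (ofReal_integral_eq_lintegral_ofReal (hSmem n).integrable_sq
      (ae_of_all _ fun ω => sq_nonneg _)).symm
  -- square integrability of Z
  have hZsqfin : ∫⁻ ω, ENNReal.ofReal (Z ω ^ 2) ∂P ≠ ⊤ := by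
    rw [hlint (fun x => ENNReal.ofReal (x ^ 2)) (by measurability)]
    have hterm : ∀ n : ℕ, p n * ∫⁻ ω, ENNReal.ofReal (S n ω ^ 2) ∂P
        ≤ (n : ℝ≥0∞) * p n * ENNReal.ofReal v + (n : ℝ≥0∞) ^ 2 * p n * ENNReal.ofReal (a ^ 2) := by
      intro n
      rw [hSof n, ENNReal.ofReal_add (by positivity) (by positivity)]
      apply le_of_eq
      rw [mul_add]
      congr 1
      · rw [ENNReal.ofReal_mul (by positivity), ENNReal.ofReal_natCast]
        ring
      · rw [mul_pow, ENNReal.ofReal_mul (by positivity), ENNReal.ofReal_pow (by positivity),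
          ENNReal.ofReal_natCast]
        ring
    refine ne_top_of_le_ne_top ?_ (ENNReal.tsum_le_tsum hterm)
    rw [ENNReal.tsum_add, ENNReal.tsum_mul_right, ENNReal.tsum_mul_right]
    exact ENNReal.add_ne_top.mpr ⟨ENNReal.mul_ne_top hc1 ENNReal.ofReal_ne_top,
      ENNReal.mul_ne_top hc2 ENNReal.ofReal_ne_top⟩
  have hZmem : MemLp Z 2 P := by
    refine (memLp_two_iff_integrable_sq hZmeas.aestronglyMeasurable).mpr
      ⟨(hZmeas.pow_const 2).aestronglyMeasurable, ?_⟩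
    rw [hasFiniteIntegral_iff_ofReal (ae_of_all _ fun ω => sq_nonneg _)]
    exact lt_top_iff_ne_top.mpr hZsqfin
  have hZint : Integrable Z P := hZmem.integrable one_le_two
  -- integral partition identity
  have hint' : ∀ (g : ℝ → ℝ), Measurable g → Integrable (fun ω => g (Z ω)) P →
      (∀ n, Integrable (fun ω => g (S n ω)) P) →
      ∫ ω, g (Z ω) ∂P = ∑' n, (p n).toReal * ∫ ω, g (S n ω) ∂P := by
    intro g hg hgint hSgint
    have h1 : ∫ ω, g (Z ω) ∂P = ∑' n, ∫ ω in En n, g (Z ω) ∂P := by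
      rw [← setIntegral_univ, ← hEnUniv, integral_iUnion hEnMeas hEnDisj
        (hEnUniv ▸ hgint.integrableOn)]
    have h2 : ∀ n, ∫ ω in En n, g (Z ω) ∂P = ∫ ω in En n, g (S n ω) ∂P := by
      intro n
      refine setIntegral_congr_fun (hEnMeas n) (fun ω hω => ?_)
      have hmn : M ω = n := hω
      rw [hZ]; simp only [hmn]
    have h3 : ∀ n, ∫ ω in En n, g (S n ω) ∂P = (p n).toReal * ∫ ω, g (S n ω) ∂P := by
      intro n
      have heq : (En n).indicator (fun ω => g (S n ω))
          = (fun ω => (({n} : Set ℕ).indicator (fun _ => (1 : ℝ)) (M ω)))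
              * (fun ω => g (S n ω)) := by
        funext ω
        by_cases h : ω ∈ En n
        · have : M ω = n := h
          simp [Set.indicator, this, h]
        · have : ¬ M ω = n := h
          simp [Set.indicator, this, h]
      have hind0 : IndepFun ((fun m : ℕ => ({n} : Set ℕ).indicator (fun _ => (1 : ℝ)) m) ∘ M)
          (g ∘ (fun ω => ∑ i ∈ Finset.range n, W i ω)) P :=
        (hMS n).comp (measurable_from_nat) hg
      have hind : IndepFun (fun ω => (({n} : Set ℕ).indicator (fun _ => (1 : ℝ)) (M ω)))
          (fun ω => g (S n ω)) P := hind0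
      have hmul := hind.integral_mul_eq_mul_integral
        (((measurable_from_nat (f := fun m : ℕ => ({n} : Set ℕ).indicator (fun _ => (1 : ℝ)) m)).comp hM).aestronglyMeasurable)
        ((hg.comp (hSmeas n)).aestronglyMeasurable)
      rw [← integral_indicator (hEnMeas n), heq, hmul]
      congr 1
      have heq2 : (fun ω => (({n} : Set ℕ).indicator (fun _ => (1 : ℝ)) (M ω)))
          = (En n).indicator (fun _ => (1 : ℝ)) := by
        funext ω
        by_cases h : M ω = n <;> simp [Set.indicator, hEn, h]
      rw [heq2, integral_indicator_const (1 : ℝ) (hEnMeas n)]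
      simp
      rfl
    rw [h1]
    exact tsum_congr fun n => (h2 n).trans (h3 n)
  -- first and second moments of M as real series
  have hr1sum : Summable (fun n : ℕ => (n : ℝ) * (p n).toReal) := by
    have h := ENNReal.summable_toReal hc1
    simpa [ENNReal.toReal_mul] using h
  have hr2sum : Summable (fun n : ℕ => (n : ℝ) ^ 2 * (p n).toReal) := by
    have h := ENNReal.summable_toReal hc2
    simpa [ENNReal.toReal_mul, ENNReal.toReal_pow] using h
  have hr1 : ∫ ω, (M ω : ℝ) ∂P = ∑' n : ℕ, (n : ℝ) * (p n).toReal :=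
    integral_comp_nat hM (g := fun n => (n : ℝ)) hMint
  have hr2 : ∫ ω, (M ω : ℝ) ^ 2 ∂P = ∑' n : ℕ, (n : ℝ) ^ 2 * (p n).toReal :=
    integral_comp_nat hM (g := fun n => (n : ℝ) ^ 2) hM2int
  -- value of ∫ Z
  have hZval : ∫ ω, Z ω ∂P = (∫ ω, (M ω : ℝ) ∂P) * a := by
    have h := hint' (fun x => x) measurable_id hZint
      (fun n => (hSmem n).integrable one_le_two)
    rw [h, hr1, ← tsum_mul_right]
    exact tsum_congr fun n => by rw [hSint n]; ring
  -- value of ∫ Z ^ 2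
  have hZsqval : ∫ ω, Z ω ^ 2 ∂P
      = v * (∫ ω, (M ω : ℝ) ∂P) + a ^ 2 * (∫ ω, (M ω : ℝ) ^ 2 ∂P) := by
    have h := hint' (fun x => x ^ 2) (measurable_id.pow_const 2) hZmem.integrable_sq
      (fun n => (hSmem n).integrable_sq)
    rw [h, hr1, hr2, ← tsum_mul_left, ← tsum_mul_left,
      ← Summable.tsum_add (hr1sum.mul_left v) (hr2sum.mul_left (a ^ 2))]
    exact tsum_congr fun n => by rw [hSsq n]; ring
  -- conclude
  have hvarZ : variance Z P = (∫ ω, (M ω : ℝ) ∂P) * v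
      + variance (fun ω => (M ω : ℝ)) P * a ^ 2 := by
    have h1 := variance_eq_sub hZmem
    have h2 := variance_eq_sub hM2
    have e1 : P[Z ^ 2] = ∫ ω, Z ω ^ 2 ∂P := by congr 1
    have e2 : P[(fun ω => (M ω : ℝ)) ^ 2] = ∫ ω, (M ω : ℝ) ^ 2 ∂P := by congr 1
    rw [e1, hZsqval, hZval] at h1
    rw [e2] at h2
    have h2' : ∫ ω, (M ω : ℝ) ^ 2 ∂P
        = variance (fun ω => (M ω : ℝ)) P + (∫ ω, (M ω : ℝ) ∂P) ^ 2 := by linarith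
    rw [h1, h2']
    ring
  exact ⟨hZmem, hZval, hvarZ⟩

lemma nat_moment {Ω : Type*} [MeasurableSpace Ω] {P : Measure Ω} [IsProbabilityMeasure P]
    {W : Ω → ℕ} (hW : Measurable W) {q : ℕ → ℝ}
    (hq : ∀ n, P {ω | W ω = n} = ENNReal.ofReal (q n)) (hqn : ∀ n, 0 ≤ q n)
    (g : ℕ → ℝ) (hg : ∀ n, 0 ≤ g n) (hsum : Summable (fun n => g n * q n)) :
    Integrable (fun ω => g (W ω)) P ∧ ∫ ω, g (W ω) ∂P = ∑' n, g n * q n := by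
  have hfin : ∫⁻ ω, ENNReal.ofReal (g (W ω)) ∂P = ENNReal.ofReal (∑' n, g n * q n) := by
    rw [lintegral_comp_nat (μ := P) hW (fun n => ENNReal.ofReal (g n)),
      ENNReal.ofReal_tsum_of_nonneg (fun n => mul_nonneg (hg n) (hqn n)) hsum]
    exact tsum_congr fun n => by rw [hq n, ← ENNReal.ofReal_mul (hg n)]
  have hint : Integrable (fun ω => g (W ω)) P := by
    refine ⟨(measurable_from_nat.comp hW).aestronglyMeasurable, ?_⟩
    rw [hasFiniteIntegral_iff_ofReal (ae_of_all _ fun ω => hg _), hfin]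
    exact ENNReal.ofReal_lt_top
  refine ⟨hint, ?_⟩
  rw [integral_comp_nat hW hint]
  exact tsum_congr fun n => by rw [hq n, ENNReal.toReal_ofReal (hqn n)]

lemma sum_Icc_id (k : ℕ) : ∑ m ∈ Finset.Icc 1 k, (m : ℝ) = k * (k + 1) / 2 := by
  induction k with
  | zero => simp
  | succ k ih =>
    rw [Finset.sum_Icc_succ_top (Nat.one_le_iff_ne_zero.mpr (Nat.succ_ne_zero k)) _, ih]
    push_cast
    ring

lemma sum_Icc_sq (k : ℕ) :
    ∑ m ∈ Finset.Icc 1 k, (m : ℝ) ^ 2 = k * (k + 1) * (2 * k + 1) / 6 := by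
  induction k with
  | zero => simp
  | succ k ih =>
    rw [Finset.sum_Icc_succ_top (Nat.one_le_iff_ne_zero.mpr (Nat.succ_ne_zero k)) _, ih]
    push_cast
    ring

section poismom
variable (mu : ℝ)

noncomputable def pois (n : ℕ) : ℝ := Real.exp (-mu) * mu ^ n / n.factorial

lemma pois_eq (n : ℕ) : pois mu n = Real.exp (-mu) * (mu ^ n / n.factorial) := by
  rw [pois, mul_div_assoc]

lemma pois_nonneg (hmu : 0 ≤ mu) (n : ℕ) : 0 ≤ pois mu n := by
  rw [pois]; positivity

lemma pois_summable1 : Summable (fun n : ℕ => (n : ℝ) * pois mu n) := by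
  have h : (fun n : ℕ => (n : ℝ) * pois mu n)
      = fun n : ℕ => Real.exp (-mu) * ((n : ℝ) * mu ^ n / n.factorial) := by
    funext n; rw [pois]; ring
  rw [h]
  exact (poisson_summable1 mu).mul_left _

lemma pois_summable2 : Summable (fun n : ℕ => (n : ℝ) ^ 2 * pois mu n) := by
  have h : (fun n : ℕ => (n : ℝ) ^ 2 * pois mu n)
      = fun n : ℕ => Real.exp (-mu) * ((n : ℝ) ^ 2 * mu ^ n / n.factorial) := by
    funext n; rw [pois]; ring
  rw [h]
  exact (poisson_summable2 mu).mul_left _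

lemma exp_neg_mul_exp : Real.exp (-mu) * Real.exp mu = 1 := by
  rw [← Real.exp_add]; simp

lemma pois_sum1 : ∑' n : ℕ, (n : ℝ) * pois mu n = mu := by
  have h : (fun n : ℕ => (n : ℝ) * pois mu n)
      = fun n : ℕ => Real.exp (-mu) * ((n : ℝ) * mu ^ n / n.factorial) := by
    funext n; rw [pois]; ring
  rw [h, tsum_mul_left, poisson_sum1]
  calc Real.exp (-mu) * (mu * Real.exp mu) = mu * (Real.exp (-mu) * Real.exp mu) := by ring
  _ = mu := by rw [exp_neg_mul_exp]; ring

lemma pois_sum2 : ∑' n : ℕ, (n : ℝ) ^ 2 * pois mu n = mu ^ 2 + mu := by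
  have h : (fun n : ℕ => (n : ℝ) ^ 2 * pois mu n)
      = fun n : ℕ => Real.exp (-mu) * ((n : ℝ) ^ 2 * mu ^ n / n.factorial) := by
    funext n; rw [pois]; ring
  rw [h, tsum_mul_left, poisson_sum2]
  calc Real.exp (-mu) * ((mu ^ 2 + mu) * Real.exp mu)
      = (mu ^ 2 + mu) * (Real.exp (-mu) * Real.exp mu) := by ring
  _ = mu ^ 2 + mu := by rw [exp_neg_mul_exp]; ring
end poismom

def extendY (sets : ℕ → Set ℝ) : ∀ i : Unit ⊕ ℕ ⊕ ℕ, Set (mixCodom i)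
  | .inl _ => Set.univ
  | .inr (.inl _) => Set.univ
  | .inr (.inr j) => sets j

def extendX (sets : ℕ → Set ℕ) : ∀ i : Unit ⊕ ℕ ⊕ ℕ, Set (mixCodom i)
  | .inl _ => Set.univ
  | .inr (.inl j) => sets j
  | .inr (.inr _) => Set.univ

lemma iIndep_Y_of_mix {Ω : Type*} [MeasurableSpace Ω] {P : Measure Ω}
    {N : Ω → ℕ} {X : ℕ → Ω → ℕ} {Y : ℕ → Ω → ℝ}
    (hindep : iIndepFun (mixFam N X Y) P) :
    iIndepFun Y P := by
  rw [iIndepFun_iff_measure_inter_preimage_eq_mul] at hindep ⊢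
  intro s sets hsets
  classical
  have hfinj : Function.Injective (fun j : ℕ => (Sum.inr (Sum.inr j) : Unit ⊕ ℕ ⊕ ℕ)) :=
    fun a b h => by simpa using h
  have hmeas : ∀ i ∈ s.image (fun j : ℕ => (Sum.inr (Sum.inr j) : Unit ⊕ ℕ ⊕ ℕ)),
      MeasurableSet[mixCodomMS i] (extendY sets i) := by
    intro i hi
    simp only [Finset.mem_image] at hi
    obtain ⟨j, hj, rfl⟩ := hi
    exact hsets j hj
  have h := hindep (s.image (fun j : ℕ => (Sum.inr (Sum.inr j) : Unit ⊕ ℕ ⊕ ℕ))) hmeas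
  have hL : (⋂ i ∈ s.image (fun j : ℕ => (Sum.inr (Sum.inr j) : Unit ⊕ ℕ ⊕ ℕ)),
      mixFam N X Y i ⁻¹' extendY sets i) = ⋂ j ∈ s, Y j ⁻¹' sets j := by
    ext ω
    simp only [Set.mem_iInter, Finset.mem_image]
    constructor
    · intro hmem j hj
      exact hmem _ ⟨j, hj, rfl⟩
    · rintro hmem i ⟨j, hj, rfl⟩
      exact hmem j hj
  have hR : ∏ i ∈ s.image (fun j : ℕ => (Sum.inr (Sum.inr j) : Unit ⊕ ℕ ⊕ ℕ)),
      P (mixFam N X Y i ⁻¹' extendY sets i) = ∏ j ∈ s, P (Y j ⁻¹' sets j) :=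
    Finset.prod_image (fun a _ b _ h => hfinj h)
  rw [hL, hR] at h
  exact h

lemma iIndep_X_of_mix {Ω : Type*} [MeasurableSpace Ω] {P : Measure Ω}
    {N : Ω → ℕ} {X : ℕ → Ω → ℕ} {Y : ℕ → Ω → ℝ}
    (hindep : iIndepFun (mixFam N X Y) P) :
    iIndepFun X P := by
  rw [iIndepFun_iff_measure_inter_preimage_eq_mul] at hindep ⊢
  intro s sets hsets
  classical
  have hfinj : Function.Injective (fun j : ℕ => (Sum.inr (Sum.inl j) : Unit ⊕ ℕ ⊕ ℕ)) :=
    fun a b h => by simpa using h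
  have hmeas : ∀ i ∈ s.image (fun j : ℕ => (Sum.inr (Sum.inl j) : Unit ⊕ ℕ ⊕ ℕ)),
      MeasurableSet[mixCodomMS i] (extendX sets i) := by
    intro i hi
    simp only [Finset.mem_image] at hi
    obtain ⟨j, hj, rfl⟩ := hi
    exact hsets j hj
  have h := hindep (s.image (fun j : ℕ => (Sum.inr (Sum.inl j) : Unit ⊕ ℕ ⊕ ℕ))) hmeas
  have hL : (⋂ i ∈ s.image (fun j : ℕ => (Sum.inr (Sum.inl j) : Unit ⊕ ℕ ⊕ ℕ)),
      mixFam N X Y i ⁻¹' extendX sets i) = ⋂ j ∈ s, X j ⁻¹' sets j := by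
    ext ω
    simp only [Set.mem_iInter, Finset.mem_image]
    constructor
    · intro hmem j hj
      exact hmem _ ⟨j, hj, rfl⟩
    · rintro hmem i ⟨j, hj, rfl⟩
      exact hmem j hj
  have hR : ∏ i ∈ s.image (fun j : ℕ => (Sum.inr (Sum.inl j) : Unit ⊕ ℕ ⊕ ℕ)),
      P (mixFam N X Y i ⁻¹' extendX sets i) = ∏ j ∈ s, P (X j ⁻¹' sets j) :=
    Finset.prod_image (fun a _ b _ h => hfinj h)
  rw [hL, hR] at h
  exact h



/-- **Variance of the compound Poisson process of order `k`:**
`Z(t)` is square-integrable and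
`Var[Z(t)] = (k(k+1)/2) λ t Var(Y₁) + (k(k+1)(2k+1)/6) λ t (𝔼[Y₁])²`. -/
theorem cppok_variance
    {Ω : Type*} [MeasurableSpace Ω] (P : Measure Ω) [IsProbabilityMeasure P]
    (k : ℕ) (hk : 1 ≤ k) (lam t : ℝ) (hlam : 0 < lam) (ht : 0 < t)
    (N : Ω → ℕ) (X : ℕ → Ω → ℕ) (Y : ℕ → Ω → ℝ)
    (hNmeas : Measurable N) (hXmeas : ∀ i, Measurable (X i))
    (hYmeas : ∀ i, Measurable (Y i))
    -- `N` is Poisson distributed with parameter `k λ t`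
    (hNdist : ∀ n : ℕ, P {ω | N ω = n}
      = ENNReal.ofReal (Real.exp (-((k : ℝ) * lam * t)) * ((k : ℝ) * lam * t) ^ n
          / (Nat.factorial n : ℝ)))
    -- each `X i` is uniformly distributed on `{1, …, k}`
    (hXdist : ∀ i, ∀ m : ℕ,
      P {ω | X i ω = m} = if 1 ≤ m ∧ m ≤ k then ((k : ℝ≥0∞))⁻¹ else 0)
    -- the `Y i` are identically distributed and square-integrable
    (hYident : ∀ i, IdentDistrib (Y i) (Y 0) P P)
    (hYsq : MemLp (Y 0) 2 P)
    -- `N`, `(X i)` and `(Y i)` are mutually independent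
    (hindep : iIndepFun (mixFam N X Y) P) :
    MemLp (fun ω => ∑ i ∈ Finset.range (∑ j ∈ Finset.range (N ω), X j ω), Y i ω) 2 P ∧
      variance (fun ω => ∑ i ∈ Finset.range (∑ j ∈ Finset.range (N ω), X j ω), Y i ω) P
        = ((k : ℝ) * ((k : ℝ) + 1) / 2) * lam * t * variance (Y 0) P
          + ((k : ℝ) * ((k : ℝ) + 1) * (2 * (k : ℝ) + 1) / 6) * lam * t
              * (∫ ω, Y 0 ω ∂P) ^ 2 := by
  classical
  have hk0 : (0 : ℝ) < (k : ℝ) := by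
    have : 0 < k := hk
    exact_mod_cast this
  set mur : ℝ := (k : ℝ) * lam * t with hmur_def
  have hmur : 0 ≤ mur := by positivity
  set M : Ω → ℕ := fun ω => ∑ j ∈ Finset.range (N ω), X j ω with hMdef
  have hMmeas : Measurable M := measurable_randSum hNmeas hXmeas
  have hXrmeas : ∀ j, Measurable (fun ω => (X j ω : ℝ)) := fun j =>
    measurable_from_nat.comp (hXmeas j)
  -- the comap σ-algebras
  set m' : (Unit ⊕ ℕ ⊕ ℕ) → MeasurableSpace Ω :=
    fun i => (mixCodomMS i).comap (mixFam N X Y i) with hm'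
  have hle : ∀ i, m' i ≤ (inferInstance : MeasurableSpace Ω) := by
    intro i
    rcases i with u | j | j
    · exact hNmeas.comap_le
    · exact (hXmeas j).comap_le
    · exact (hYmeas j).comap_le
  set SNX : Set (Unit ⊕ ℕ ⊕ ℕ) := Set.range (Sum.inl : Unit → Unit ⊕ ℕ ⊕ ℕ)
    ∪ Set.range (fun j : ℕ => (Sum.inr (Sum.inl j) : Unit ⊕ ℕ ⊕ ℕ)) with hSNX
  set SY : Set (Unit ⊕ ℕ ⊕ ℕ)
    := Set.range (fun j : ℕ => (Sum.inr (Sum.inr j) : Unit ⊕ ℕ ⊕ ℕ)) with hSY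
  set SN : Set (Unit ⊕ ℕ ⊕ ℕ) := Set.range (Sum.inl : Unit → Unit ⊕ ℕ ⊕ ℕ) with hSN
  set SX : Set (Unit ⊕ ℕ ⊕ ℕ)
    := Set.range (fun j : ℕ => (Sum.inr (Sum.inl j) : Unit ⊕ ℕ ⊕ ℕ)) with hSX
  have hIndep12 : Indep (⨆ i ∈ SNX, m' i) (⨆ i ∈ SY, m' i) P := by
    refine indep_iSup_of_disjoint hle hindep.iIndep ?_
    rw [Set.disjoint_left]
    rintro i (⟨u, rfl⟩ | ⟨j, rfl⟩) ⟨j', hj'⟩ <;> simp at hj'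
  have hIndepNX : Indep (⨆ i ∈ SN, m' i) (⨆ i ∈ SX, m' i) P := by
    refine indep_iSup_of_disjoint hle hindep.iIndep ?_
    rw [Set.disjoint_left]
    rintro i ⟨u, rfl⟩ ⟨j', hj'⟩
    simp at hj'
  have hMS_Y : ∀ n : ℕ, IndepFun M (fun ω => ∑ i ∈ Finset.range n, Y i ω) P := by
    intro n
    have hmemN : (Sum.inl () : Unit ⊕ ℕ ⊕ ℕ) ∈ SNX := Or.inl ⟨(), rfl⟩
    have hmemX : ∀ j : ℕ, (Sum.inr (Sum.inl j) : Unit ⊕ ℕ ⊕ ℕ) ∈ SNX :=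
      fun j => Or.inr ⟨j, rfl⟩
    have hmemY : ∀ j : ℕ, (Sum.inr (Sum.inr j) : Unit ⊕ ℕ ⊕ ℕ) ∈ SY := fun j => ⟨j, rfl⟩
    have hMm : Measurable[⨆ i ∈ SNX, m' i] M :=
      measurable_randSum (mΩ := ⨆ i ∈ SNX, m' i)
        (Measurable.of_comap_le (le_biSup m' hmemN))
        (fun j => Measurable.of_comap_le (le_biSup m' (hmemX j)))
    have hSm : Measurable[⨆ i ∈ SY, m' i] (fun ω => ∑ i ∈ Finset.range n, Y i ω) :=
      Finset.measurable_sum _ (fun i _ => Measurable.of_comap_le (le_biSup m' (hmemY i)))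
    exact (IndepFun_iff_Indep _ _ _).mpr (indep_mono hIndep12 hMm.comap_le hSm.comap_le)
  have hN_SX : ∀ n : ℕ, IndepFun N (fun ω => ∑ j ∈ Finset.range n, (X j ω : ℝ)) P := by
    intro n
    have hmemN : (Sum.inl () : Unit ⊕ ℕ ⊕ ℕ) ∈ SN := ⟨(), rfl⟩
    have hmemX : ∀ j : ℕ, (Sum.inr (Sum.inl j) : Unit ⊕ ℕ ⊕ ℕ) ∈ SX := fun j => ⟨j, rfl⟩
    have hNm : Measurable[⨆ i ∈ SN, m' i] N :=
      Measurable.of_comap_le (le_biSup m' hmemN)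
    have hSm : Measurable[⨆ i ∈ SX, m' i] (fun ω => ∑ j ∈ Finset.range n, (X j ω : ℝ)) :=
      Finset.measurable_sum _ (fun j _ =>
        measurable_from_nat.comp (Measurable.of_comap_le (le_biSup m' (hmemX j))))
    exact (IndepFun_iff_Indep _ _ _).mpr (indep_mono hIndepNX hNm.comap_le hSm.comap_le)
  have hYindep : iIndepFun Y P :=
    iIndep_Y_of_mix hindep
  have hXrindep : iIndepFun
      (fun j => fun ω => (X j ω : ℝ)) P := by
    have h := (iIndep_X_of_mix hindep).comp (fun _ => fun n : ℕ => (n : ℝ))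
      (fun _ => measurable_from_nat)
    exact h
  have hXident : ∀ j, IdentDistrib (fun ω => (X j ω : ℝ)) (fun ω => (X 0 ω : ℝ)) P P := by
    intro j
    have h0 : IdentDistrib (X j) (X 0) P P := by
      refine ⟨(hXmeas j).aemeasurable, (hXmeas 0).aemeasurable, ?_⟩
      refine Measure.ext_of_singleton fun m => ?_
      rw [Measure.map_apply (hXmeas j) (measurableSet_singleton m),
        Measure.map_apply (hXmeas 0) (measurableSet_singleton m)]
      show P {ω | X j ω = m} = P {ω | X 0 ω = m}
      rw [hXdist j m, hXdist 0 m]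
    exact h0.comp (measurable_from_nat (f := fun n : ℕ => (n : ℝ)))
  -- moments of X
  have hqX : ∀ m, P {ω | X 0 ω = m}
      = ENNReal.ofReal (if 1 ≤ m ∧ m ≤ k then (k : ℝ)⁻¹ else 0) := by
    intro m
    rw [hXdist 0 m]
    by_cases h : 1 ≤ m ∧ m ≤ k
    · rw [if_pos h, if_pos h, ENNReal.ofReal_inv_of_pos hk0, ENNReal.ofReal_natCast]
    · rw [if_neg h, if_neg h, ENNReal.ofReal_zero]
  have hqXnn : ∀ m : ℕ, 0 ≤ (if 1 ≤ m ∧ m ≤ k then (k : ℝ)⁻¹ else 0) := by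
    intro m
    split_ifs
    · positivity
    · exact le_refl 0
  have hqX0 : ∀ g : ℕ → ℝ, ∀ m ∉ Finset.Icc 1 k,
      g m * (if 1 ≤ m ∧ m ≤ k then (k : ℝ)⁻¹ else 0) = 0 := by
    intro g m hm
    rw [Finset.mem_Icc] at hm
    rw [if_neg hm, mul_zero]
  have hXsum : ∀ g : ℕ → ℝ,
      Summable (fun m => g m * (if 1 ≤ m ∧ m ≤ k then (k : ℝ)⁻¹ else 0)) := fun g =>
    summable_of_ne_finset_zero (hqX0 g)
  have hXtsum : ∀ g : ℕ → ℝ,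
      (∑' m, g m * (if 1 ≤ m ∧ m ≤ k then (k : ℝ)⁻¹ else 0))
        = (∑ m ∈ Finset.Icc 1 k, g m) * (k : ℝ)⁻¹ := by
    intro g
    rw [tsum_eq_sum (hqX0 g)]
    have hcg : ∀ m ∈ Finset.Icc 1 k,
        g m * (if 1 ≤ m ∧ m ≤ k then (k : ℝ)⁻¹ else 0) = g m * (k : ℝ)⁻¹ := by
      intro m hm
      rw [Finset.mem_Icc] at hm
      rw [if_pos hm]
    rw [Finset.sum_congr rfl hcg, ← Finset.sum_mul]
  have hmomX1 := nat_moment (hXmeas 0) hqX hqXnn (fun m => (m : ℝ))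
    (fun m => Nat.cast_nonneg m) (hXsum _)
  have hmomX2 := nat_moment (hXmeas 0) hqX hqXnn (fun m => (m : ℝ) ^ 2)
    (fun m => by positivity) (hXsum _)
  have hEX1 : ∫ ω, (X 0 ω : ℝ) ∂P = ((k : ℝ) + 1) / 2 := by
    rw [hmomX1.2, hXtsum, sum_Icc_id]
    field_simp
  have hEX2 : ∫ ω, (X 0 ω : ℝ) ^ 2 ∂P = ((k : ℝ) + 1) * (2 * (k : ℝ) + 1) / 6 := by
    rw [hmomX2.2, hXtsum, sum_Icc_sq]
    field_simp
  have hX0mem : MemLp (fun ω => (X 0 ω : ℝ)) 2 P :=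
    (memLp_two_iff_integrable_sq (hXrmeas 0).aestronglyMeasurable).mpr hmomX2.1
  -- moments of N
  have hqN : ∀ n, P {ω | N ω = n} = ENNReal.ofReal (pois mur n) := by
    intro n
    rw [hNdist n]
    rfl
  have hmomN1 := nat_moment hNmeas hqN (pois_nonneg mur hmur) (fun n => (n : ℝ))
    (fun n => Nat.cast_nonneg n) (pois_summable1 mur)
  have hmomN2 := nat_moment hNmeas hqN (pois_nonneg mur hmur) (fun n => (n : ℝ) ^ 2)
    (fun n => by positivity) (pois_summable2 mur)
  have hEN1 : ∫ ω, (N ω : ℝ) ∂P = mur := by rw [hmomN1.2]; exact pois_sum1 mur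
  have hEN2 : ∫ ω, (N ω : ℝ) ^ 2 ∂P = mur ^ 2 + mur := by rw [hmomN2.2]; exact pois_sum2 mur
  have hNmem : MemLp (fun ω => (N ω : ℝ)) 2 P :=
    (memLp_two_iff_integrable_sq
      (measurable_from_nat.comp hNmeas).aestronglyMeasurable).mpr hmomN2.1
  have hNvar : variance (fun ω => (N ω : ℝ)) P = mur := by
    have h := variance_eq_sub hNmem
    have e : P[(fun ω => (N ω : ℝ)) ^ 2] = ∫ ω, (N ω : ℝ) ^ 2 ∂P := by congr 1
    rw [e, hEN1, hEN2] at h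
    rw [h]; ring
  -- first layer: moments of M
  have layer1 := randsum_moments P N (fun j => fun ω => (X j ω : ℝ)) hNmeas hXrmeas
    hXident hX0mem hXrindep hN_SX hNmem
  have castMr : (fun ω => ((M ω : ℕ) : ℝ))
      = (fun ω => ∑ j ∈ Finset.range (N ω), (X j ω : ℝ)) := by
    funext ω
    rw [hMdef]
    push_cast
    rfl
  have hMr2 : MemLp (fun ω => (M ω : ℝ)) 2 P := by rw [castMr]; exact layer1.1
  have hMrint : ∫ ω, (M ω : ℝ) ∂P = mur * (((k : ℝ) + 1) / 2) := by
    rw [castMr, layer1.2.1, hEN1, hEX1]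
  have hXvar : variance (fun ω => (X 0 ω : ℝ)) P
      = ((k : ℝ) + 1) * (2 * (k : ℝ) + 1) / 6 - (((k : ℝ) + 1) / 2) ^ 2 := by
    have h := variance_eq_sub hX0mem
    have e : P[(fun ω => (X 0 ω : ℝ)) ^ 2] = ∫ ω, (X 0 ω : ℝ) ^ 2 ∂P := by congr 1
    rw [e, hEX1, hEX2] at h
    exact h
  have hMrvar : variance (fun ω => (M ω : ℝ)) P
      = mur * (((k : ℝ) + 1) * (2 * (k : ℝ) + 1) / 6) := by
    rw [castMr, layer1.2.2, hEN1, hNvar, hEX1, hXvar]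
    ring
  -- second layer
  have layer2 := randsum_moments P M Y hMmeas hYmeas hYident hYsq hYindep hMS_Y hMr2
  have hfun : (fun ω => ∑ i ∈ Finset.range (∑ j ∈ Finset.range (N ω), X j ω), Y i ω)
      = (fun ω => ∑ i ∈ Finset.range (M ω), Y i ω) := rfl
  constructor
  · rw [hfun]; exact layer2.1
  · rw [hfun, layer2.2.2, hMrint, hMrvar, hmur_def]
    ring
end

section
/- Let N be Poisson distributed with parameter kλt, let (X_i)_{i≥1} be i.i.d. uniform on {1,…,k}, and let (Y_i)_{i≥1} be i.i.d. square-integrable real random variables, with N, (X_i), (Y_i) mutually independent. Set Z(t) = ∑_{i=1}^{∑_{j=1}^{N} X_j} Y_i. Then Var[Z(t)] − 𝔼[Z(t)] = (k(k+1)/2) · λ t · [ 𝔼[Y_1²] − 𝔼[Y_1] + ((2k+1)/3 − 1) · (𝔼[Y_1])² ]. -/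
open MeasureTheory ProbabilityTheory
open scoped ENNReal NNReal

/-! ### Auxiliary lemmas -/

lemma aux_indepFun_of_measurable {Ω : Type*} (m1 m2 : MeasurableSpace Ω)
    {mΩ : MeasurableSpace Ω} {P : Measure Ω} (h : Indep m1 m2 P)
    {β γ : Type*} [mβ : MeasurableSpace β] [mγ : MeasurableSpace γ] {f : Ω → β} {g : Ω → γ}
    (hf : Measurable[m1] f) (hg : Measurable[m2] g) : IndepFun f g P := by
  rw [IndepFun_iff_Indep]
  exact indep_of_indep_of_le_right (indep_of_indep_of_le_left h hf.comap_le) hg.comap_le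

lemma aux_setIntegral_indep {Ω : Type*} (m1 m2 : MeasurableSpace Ω)
    {mΩ : MeasurableSpace Ω} {P : Measure Ω} [IsProbabilityMeasure P]
    (h : Indep m1 m2 P) (hm1 : m1 ≤ mΩ)
    {s : Set Ω} (hs : MeasurableSet[m1] s) {g : Ω → ℝ}
    (hg : Measurable[m2] g) (hgint : Integrable g P) :
    ∫ ω in s, g ω ∂P = (P s).toReal * ∫ ω, g ω ∂P := by
  have hsΩ : MeasurableSet s := hm1 _ hs
  have hind : IndepFun (s.indicator (fun _ => (1 : ℝ))) g P :=
    aux_indepFun_of_measurable m1 m2 h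
      ((measurable_const : Measurable[m1] fun _ : Ω => (1 : ℝ)).indicator hs) hg
  have h1 : Integrable (s.indicator fun _ => (1 : ℝ)) P := (integrable_const 1).indicator hsΩ
  have hmul := hind.integral_mul_eq_mul_integral h1.aestronglyMeasurable hgint.aestronglyMeasurable
  rw [← integral_indicator hsΩ]
  calc ∫ ω, s.indicator g ω ∂P
      = ∫ ω, (s.indicator (fun _ => (1 : ℝ)) * g) ω ∂P := by
        congr 1; ext ω; by_cases hω : ω ∈ s <;> simp [Set.indicator, hω]
    _ = (∫ ω, s.indicator (fun _ => (1 : ℝ)) ω ∂P) * ∫ ω, g ω ∂P := hmul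
    _ = (P s).toReal * ∫ ω, g ω ∂P := by rw [integral_indicator_const _ hsΩ]; simp [measureReal_def]

section Part
variable {Ω : Type*} [mΩ : MeasurableSpace Ω] {P : Measure Ω}

omit mΩ in
lemma aux_pairwise_disjoint_fiber (W : Ω → ℕ) :
    Pairwise (Function.onFun Disjoint (fun n => {ω | W ω = n})) :=
  fun _ _ hij => Set.disjoint_left.2 fun _ hi hj => hij (hi.symm.trans hj)

lemma aux_hasSum_integral_partition [IsProbabilityMeasure P] {W : Ω → ℕ} (hW : Measurable W)
    {f : Ω → ℝ} (hf : Integrable f P) :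
    HasSum (fun n => ∫ ω in {ω | W ω = n}, f ω ∂P) (∫ ω, f ω ∂P) := by
  have hU : (⋃ n, {ω | W ω = n}) = Set.univ := by ext ω; simp
  have h := hasSum_integral_iUnion (μ := P) (s := fun n => {ω | W ω = n})
      (fun n => hW (measurableSet_singleton n))
      (aux_pairwise_disjoint_fiber W)
      (by rw [hU]; exact hf.integrableOn)
  rwa [hU, Measure.restrict_univ] at h

lemma aux_lintegral_partition (W : Ω → ℕ) (hW : Measurable W) (f : Ω → ℝ≥0∞) :
    ∫⁻ ω, f ω ∂P = ∑' n, ∫⁻ ω in {ω | W ω = n}, f ω ∂P := by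
  have hU : (⋃ n, {ω | W ω = n}) = Set.univ := by ext ω; simp
  have h := lintegral_iUnion (μ := P) (s := fun n => {ω | W ω = n})
      (fun n : ℕ => hW (measurableSet_singleton n)) (aux_pairwise_disjoint_fiber W) f
  rwa [hU, Measure.restrict_univ] at h

lemma aux_lintegral_nat_sq (W : Ω → ℕ) (hW : Measurable W) :
    ∫⁻ ω, ((W ω : ℝ≥0∞)) ^ 2 ∂P = ∑' n : ℕ, (n : ℝ≥0∞) ^ 2 * P {ω | W ω = n} := by
  rw [aux_lintegral_partition W hW]
  apply tsum_congr
  intro n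
  have h : ∫⁻ ω in {ω | W ω = n}, ((W ω : ℝ≥0∞)) ^ 2 ∂P
      = ∫⁻ _ in {ω | W ω = n}, ((n : ℝ≥0∞)) ^ 2 ∂P :=
    setLIntegral_congr_fun (hW (measurableSet_singleton n))
      (fun ω (hω : W ω = n) => by simp [hω])
  rw [h, setLIntegral_const]

end Part

lemma aux_hasSum_exp (x : ℝ) : HasSum (fun n => x ^ n / n.factorial) (Real.exp x) := by
  rw [Real.exp_eq_exp_ℝ]
  exact NormedSpace.expSeries_div_hasSum_exp x

lemma aux_hasSum_exp1 (x : ℝ) :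
    HasSum (fun n : ℕ => (n : ℝ) * x ^ n / n.factorial) (x * Real.exp x) := by
  have h2 : HasSum (fun n : ℕ => ((n + 1 : ℕ) : ℝ) * x ^ (n + 1) / ((n + 1 : ℕ)).factorial)
      (x * Real.exp x) := by
    have h := (aux_hasSum_exp x).mul_left x
    convert! h using 2 with n
    rw [Nat.factorial_succ]
    have hf : (n.factorial : ℝ) ≠ 0 := Nat.cast_ne_zero.2 n.factorial_ne_zero
    push_cast
    field_simp
    ring
  have h3 := (hasSum_nat_add_iff (f := fun n : ℕ => (n : ℝ) * x ^ n / n.factorial) 1).1 h2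
  simpa using h3

lemma aux_hasSum_exp2 (x : ℝ) :
    HasSum (fun n : ℕ => (n : ℝ) * ((n : ℝ) - 1) * x ^ n / n.factorial) (x ^ 2 * Real.exp x) := by
  have h2 : HasSum (fun n : ℕ => ((n + 2 : ℕ) : ℝ) * (((n + 2 : ℕ) : ℝ) - 1) * x ^ (n + 2)
      / ((n + 2 : ℕ)).factorial) (x ^ 2 * Real.exp x) := by
    have h := (aux_hasSum_exp x).mul_left (x ^ 2)
    convert! h using 2 with n
    have h1 : (((n + 2).factorial : ℕ) : ℝ) = ((n : ℝ) + 2) * ((n : ℝ) + 1) * n.factorial := by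
      rw [Nat.factorial_succ, Nat.factorial_succ]; push_cast; ring
    have hf : (n.factorial : ℝ) ≠ 0 := Nat.cast_ne_zero.2 n.factorial_ne_zero
    rw [h1]
    push_cast
    field_simp
    ring
  have h3 := (hasSum_nat_add_iff
      (f := fun n : ℕ => (n : ℝ) * ((n : ℝ) - 1) * x ^ n / n.factorial) 2).1 h2
  simpa [Finset.sum_range_succ] using h3

lemma aux_sum_range_id (n : ℕ) : ∑ m ∈ Finset.range n, (m : ℝ) = n * (n - 1) / 2 := by
  induction n with
  | zero => simp
  | succ n ih => rw [Finset.sum_range_succ, ih]; push_cast; ring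

lemma aux_sum_range_sq (n : ℕ) :
    ∑ m ∈ Finset.range n, (m : ℝ) ^ 2 = n * (n - 1) * (2 * n - 1) / 6 := by
  induction n with
  | zero => simp
  | succ n ih => rw [Finset.sum_range_succ, ih]; push_cast; ring

lemma aux_hasSum_congr {f g : ℕ → ℝ} {a : ℝ} (h : HasSum f a) (hfg : ∀ n, f n = g n) :
    HasSum g a := (funext hfg : f = g) ▸ h

lemma aux_integral_sq_sum {Ω : Type*} [mΩ : MeasurableSpace Ω] {P : Measure Ω}
    [IsProbabilityMeasure P] {Y : ℕ → Ω → ℝ} (n : ℕ)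
    (hint : ∀ i j, Integrable (fun ω => Y i ω * Y j ω) P)
    (μ1 Eq2 : ℝ)
    (hdiag : ∀ i, ∫ ω, Y i ω * Y i ω ∂P = Eq2)
    (hoff : ∀ i j, i ≠ j → ∫ ω, Y i ω * Y j ω ∂P = μ1 ^ 2) :
    ∫ ω, (∑ i ∈ Finset.range n, Y i ω) ^ 2 ∂P
      = (n : ℝ) ^ 2 * μ1 ^ 2 + n * (Eq2 - μ1 ^ 2) := by
  have hexp : ∀ ω : Ω, (∑ i ∈ Finset.range n, Y i ω) ^ 2
      = ∑ i ∈ Finset.range n, ∑ j ∈ Finset.range n, Y i ω * Y j ω := by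
    intro ω; rw [sq, Finset.sum_mul_sum]
  simp_rw [hexp]
  rw [integral_finset_sum _ (fun i _ => integrable_finset_sum _ (fun j _ => hint i j))]
  have hswap : ∀ i ∈ Finset.range n, ∫ ω, ∑ j ∈ Finset.range n, Y i ω * Y j ω ∂P
      = ∑ j ∈ Finset.range n, ∫ ω, Y i ω * Y j ω ∂P :=
    fun i _ => integral_finset_sum _ (fun j _ => hint i j)
  rw [Finset.sum_congr rfl hswap]
  have hij : ∀ i ∈ Finset.range n, ∑ j ∈ Finset.range n, ∫ ω, Y i ω * Y j ω ∂P
      = (n : ℝ) * μ1 ^ 2 + (Eq2 - μ1 ^ 2) := by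
    intro i hi
    have hterm : ∀ j ∈ Finset.range n, ∫ ω, Y i ω * Y j ω ∂P
        = μ1 ^ 2 + (if i = j then Eq2 - μ1 ^ 2 else 0) := by
      intro j _
      by_cases h : i = j
      · subst h; rw [hdiag i]; simp
      · rw [hoff i j h]; simp [h]
    rw [Finset.sum_congr rfl hterm, Finset.sum_add_distrib, Finset.sum_const,
      Finset.card_range, Finset.sum_ite_eq, if_pos hi]
    ring
  rw [Finset.sum_congr rfl hij, Finset.sum_const, Finset.card_range]
  ring

/-- sup σ-algebra generated by a sub-block of the family -/
def mixBlk {Ω : Type*} (N : Ω → ℕ) (X : ℕ → Ω → ℕ) (Y : ℕ → Ω → ℝ)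
    (A : Set (Unit ⊕ ℕ ⊕ ℕ)) : MeasurableSpace Ω :=
  ⨆ i ∈ A, MeasurableSpace.comap (mixFam N X Y i) (mixCodomMS i)

def idxY : Set (Unit ⊕ ℕ ⊕ ℕ) := Set.range (fun j : ℕ => Sum.inr (Sum.inr j))
def idxX : Set (Unit ⊕ ℕ ⊕ ℕ) := Set.range (fun j : ℕ => Sum.inr (Sum.inl j))
def idxN : Set (Unit ⊕ ℕ ⊕ ℕ) := {Sum.inl ()}

section MixLemmas

variable {Ω : Type*} [mΩ : MeasurableSpace Ω] {P : Measure Ω}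
  {N : Ω → ℕ} {X : ℕ → Ω → ℕ} {Y : ℕ → Ω → ℝ}

lemma mixFam_measurable (hN : Measurable N) (hX : ∀ i, Measurable (X i))
    (hY : ∀ i, Measurable (Y i)) : ∀ i, Measurable (mixFam N X Y i) := by
  rintro (⟨⟩ | j | j)
  · exact hN
  · exact hX j
  · exact hY j

lemma mixBlk_le (hN : Measurable N) (hX : ∀ i, Measurable (X i))
    (hY : ∀ i, Measurable (Y i)) (A : Set (Unit ⊕ ℕ ⊕ ℕ)) :
    mixBlk N X Y A ≤ mΩ :=
  iSup₂_le fun i _ => (mixFam_measurable hN hX hY i).comap_le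

omit mΩ in
lemma mixBlk_measurable_N {A : Set (Unit ⊕ ℕ ⊕ ℕ)} (hA : Sum.inl () ∈ A) :
    Measurable[mixBlk N X Y A] N := by
  refine Measurable.of_comap_le ?_
  exact le_biSup (fun i => MeasurableSpace.comap (mixFam N X Y i) (mixCodomMS i)) hA

omit mΩ in
lemma mixBlk_measurable_X {A : Set (Unit ⊕ ℕ ⊕ ℕ)} (j : ℕ) (hA : Sum.inr (Sum.inl j) ∈ A) :
    Measurable[mixBlk N X Y A] (X j) := by
  refine Measurable.of_comap_le ?_
  exact le_biSup (fun i => MeasurableSpace.comap (mixFam N X Y i) (mixCodomMS i)) hA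

omit mΩ in
lemma mixBlk_measurable_Y {A : Set (Unit ⊕ ℕ ⊕ ℕ)} (i : ℕ) (hA : Sum.inr (Sum.inr i) ∈ A) :
    Measurable[mixBlk N X Y A] (Y i) := by
  refine Measurable.of_comap_le ?_
  exact le_biSup (fun i' => MeasurableSpace.comap (mixFam N X Y i') (mixCodomMS i')) hA

lemma mixBlk_indep (hN : Measurable N) (hX : ∀ i, Measurable (X i))
    (hY : ∀ i, Measurable (Y i)) (hindep : iIndepFun (mixFam N X Y) P)
    {A B : Set (Unit ⊕ ℕ ⊕ ℕ)} (hAB : Disjoint A B) :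
    Indep (mixBlk N X Y A) (mixBlk N X Y B) P :=
  indep_iSup_of_disjoint (fun i => (mixFam_measurable hN hX hY i).comap_le)
    ((iIndepFun_iff_iIndep _ _ _).1 hindep) hAB

lemma idx_disjoint_NXY : Disjoint idxYᶜ idxY := disjoint_compl_left

lemma idx_disjoint_NX : Disjoint idxN idxX := by
  rw [Set.disjoint_left]
  rintro a ha ⟨j, rfl⟩
  simp [idxN] at ha

lemma idxN_mem_compl : Sum.inl () ∈ idxYᶜ := by
  intro h; obtain ⟨j, hj⟩ := h; exact absurd hj (by simp)

lemma idxX_mem_compl (j : ℕ) : Sum.inr (Sum.inl j) ∈ idxYᶜ := by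
  intro h; obtain ⟨i, hi⟩ := h; exact absurd hi (by simp)

end MixLemmas

set_option maxHeartbeats 1600000 in
/-- **Index-of-dispersion identity for the compound Poisson process of order `k`:**
`Var[Z(t)] − 𝔼[Z(t)] = (k(k+1)/2) λ t (𝔼[Y₁²] − 𝔼[Y₁] + ((2k+1)/3 − 1) (𝔼[Y₁])²)`. -/
theorem cppok_dispersion_identity
    {Ω : Type*} [MeasurableSpace Ω] (P : Measure Ω) [IsProbabilityMeasure P]
    (k : ℕ) (hk : 1 ≤ k) (lam t : ℝ) (hlam : 0 < lam) (ht : 0 < t)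
    (N : Ω → ℕ) (X : ℕ → Ω → ℕ) (Y : ℕ → Ω → ℝ)
    (hNmeas : Measurable N) (hXmeas : ∀ i, Measurable (X i))
    (hYmeas : ∀ i, Measurable (Y i))
    -- `N` is Poisson distributed with parameter `k λ t`
    (hNdist : ∀ n : ℕ, P {ω | N ω = n}
      = ENNReal.ofReal (Real.exp (-((k : ℝ) * lam * t)) * ((k : ℝ) * lam * t) ^ n
          / (Nat.factorial n : ℝ)))
    -- each `X i` is uniformly distributed on `{1, …, k}`
    (hXdist : ∀ i, ∀ m : ℕ,
      P {ω | X i ω = m} = if 1 ≤ m ∧ m ≤ k then ((k : ℝ≥0∞))⁻¹ else 0)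
    -- the `Y i` are identically distributed and square-integrable
    (hYident : ∀ i, IdentDistrib (Y i) (Y 0) P P)
    (hYsq : MemLp (Y 0) 2 P)
    -- `N`, `(X i)` and `(Y i)` are mutually independent
    (hindep : iIndepFun (mixFam N X Y) P) :
    variance (fun ω => ∑ i ∈ Finset.range (∑ j ∈ Finset.range (N ω), X j ω), Y i ω) P
        - ∫ ω, (∑ i ∈ Finset.range (∑ j ∈ Finset.range (N ω), X j ω), Y i ω) ∂P
      = ((k : ℝ) * ((k : ℝ) + 1) / 2) * lam * t
          * ((∫ ω, (Y 0 ω) ^ 2 ∂P) - (∫ ω, Y 0 ω ∂P)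
              + ((2 * (k : ℝ) + 1) / 3 - 1) * (∫ ω, Y 0 ω ∂P) ^ 2) := by
  classical
  set μ1 := ∫ ω, Y 0 ω ∂P with hμ1
  set Eq2 := ∫ ω, (Y 0 ω) ^ 2 ∂P with hEq2def
  set Λ := (k : ℝ) * lam * t with hΛ
  set EX : ℝ := ((k : ℝ) + 1) / 2 with hEX
  set EX2 : ℝ := ((k : ℝ) + 1) * (2 * (k : ℝ) + 1) / 6 with hEX2
  set Z : Ω → ℝ := fun ω => ∑ i ∈ Finset.range (∑ j ∈ Finset.range (N ω), X j ω), Y i ω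
    with hZdef
  set S : Ω → ℕ := fun ω => ∑ j ∈ Finset.range (N ω), X j ω with hSdef
  have hZapp : ∀ ω, Z ω = ∑ i ∈ Finset.range (S ω), Y i ω := fun ω => by
    simp only [hZdef, hSdef]
  -- ## numeric basics
  have hkR : (1 : ℝ) ≤ (k : ℝ) := by exact_mod_cast hk
  have hk0 : (k : ℝ) ≠ 0 := by positivity
  have hΛpos : 0 < Λ := by rw [hΛ]; positivity
  -- ## pmf values
  have hpNr : ∀ n : ℕ, (P {ω | N ω = n}).toReal
      = Real.exp (-Λ) * Λ ^ n / n.factorial := by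
    intro n
    rw [hNdist n, ENNReal.toReal_ofReal (by positivity)]
  have hpXr : ∀ j m : ℕ, (P {ω | X j ω = m}).toReal
      = if 1 ≤ m ∧ m ≤ k then ((k : ℝ))⁻¹ else 0 := by
    intro j m
    rw [hXdist j m]
    split
    · rw [← ENNReal.ofReal_natCast, ← ENNReal.ofReal_inv_of_pos (by positivity),
        ENNReal.toReal_ofReal (by positivity)]
    · simp
  -- ## a.e. bound on X
  have hXbd : ∀ j, ∀ᵐ ω ∂P, X j ω ≤ k := by
    intro j
    rw [ae_iff]
    have hsub : {ω | ¬ X j ω ≤ k} ⊆ ⋃ m : ℕ, {ω | X j ω = k + 1 + m} := by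
      intro ω hω
      simp only [Set.mem_setOf_eq, not_le] at hω
      simp only [Set.mem_iUnion, Set.mem_setOf_eq]
      exact ⟨X j ω - (k + 1), by omega⟩
    refine measure_mono_null hsub (measure_iUnion_null fun m => ?_)
    rw [hXdist j (k + 1 + m), if_neg (by omega)]
  have hXbdall : ∀ᵐ ω ∂P, ∀ j, X j ω ≤ k := ae_all_iff.2 hXbd
  -- ## measurability
  have hSmeasGen : ∀ (m' : MeasurableSpace Ω), Measurable[m'] N →
      (∀ j, Measurable[m'] (X j)) → Measurable[m'] S := by
    intro m' hN hX
    apply measurable_to_countable'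
    intro mval
    have hset : S ⁻¹' {mval}
        = ⋃ n, ({ω | N ω = n} ∩ {ω | ∑ j ∈ Finset.range n, X j ω = mval}) := by
      ext ω
      simp only [Set.mem_preimage, Set.mem_singleton_iff, Set.mem_iUnion, Set.mem_inter_iff,
        Set.mem_setOf_eq, hSdef]
      constructor
      · intro h; exact ⟨N ω, rfl, h⟩
      · rintro ⟨n, hn, h⟩; rw [hn]; exact h
    rw [hset]
    exact MeasurableSet.iUnion fun n => (hN (measurableSet_singleton n)).inter
      ((Finset.measurable_sum _ (fun j _ => hX j)) (measurableSet_singleton mval))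
  have hSmeas : Measurable S := hSmeasGen _ hNmeas hXmeas
  have hSsetM : ∀ m, MeasurableSet {ω | S ω = m} :=
    fun m => hSmeas (measurableSet_singleton m)
  have hNsetM : ∀ n, MeasurableSet {ω | N ω = n} :=
    fun n => hNmeas (measurableSet_singleton n)
  have hXsetM : ∀ j m, MeasurableSet {ω | X j ω = m} :=
    fun j m => hXmeas j (measurableSet_singleton m)
  have hZmeas : Measurable Z := by
    have h1 : Measurable fun p : Ω × ℕ => ∑ i ∈ Finset.range p.2, Y i p.1 :=
      measurable_from_prod_countable_left fun n =>
        Finset.measurable_sum (Finset.range n) fun i _ => hYmeas i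
    exact h1.comp (measurable_id.prodMk hSmeas)
  -- ## independence blocks
  have hIndep1 : Indep (mixBlk N X Y idxYᶜ) (mixBlk N X Y idxY) P :=
    mixBlk_indep hNmeas hXmeas hYmeas hindep idx_disjoint_NXY
  have hIndep2 : Indep (mixBlk N X Y idxN) (mixBlk N X Y idxX) P :=
    mixBlk_indep hNmeas hXmeas hYmeas hindep idx_disjoint_NX
  have hYblk : ∀ i, Measurable[mixBlk N X Y idxY] (Y i) :=
    fun i => mixBlk_measurable_Y i ⟨i, rfl⟩
  have hXblk : ∀ j, Measurable[mixBlk N X Y idxX] (X j) :=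
    fun j => mixBlk_measurable_X j ⟨j, rfl⟩
  have hNblk : Measurable[mixBlk N X Y idxN] N := mixBlk_measurable_N rfl
  have hSblk : Measurable[mixBlk N X Y idxYᶜ] S :=
    hSmeasGen _ (mixBlk_measurable_N idxN_mem_compl)
      (fun j => mixBlk_measurable_X j (idxX_mem_compl j))
  have keyY : ∀ (m : ℕ) (g : Ω → ℝ), Measurable[mixBlk N X Y idxY] g → Integrable g P →
      ∫ ω in {ω | S ω = m}, g ω ∂P = (P {ω | S ω = m}).toReal * ∫ ω, g ω ∂P :=
    fun m g hg hgi => aux_setIntegral_indep (mixBlk N X Y idxYᶜ) (mixBlk N X Y idxY)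
      hIndep1 (mixBlk_le hNmeas hXmeas hYmeas _) (hSblk (measurableSet_singleton m)) hg hgi
  have keyX : ∀ (n : ℕ) (g : Ω → ℝ), Measurable[mixBlk N X Y idxX] g → Integrable g P →
      ∫ ω in {ω | N ω = n}, g ω ∂P = (P {ω | N ω = n}).toReal * ∫ ω, g ω ∂P :=
    fun n g hg hgi => aux_setIntegral_indep (mixBlk N X Y idxN) (mixBlk N X Y idxX)
      hIndep2 (mixBlk_le hNmeas hXmeas hYmeas _) (hNblk (measurableSet_singleton n)) hg hgi
  have hYind : ∀ i j : ℕ, i ≠ j → IndepFun (Y i) (Y j) P := fun i j hij =>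
    hindep.indepFun (show (Sum.inr (Sum.inr i) : Unit ⊕ ℕ ⊕ ℕ) ≠ Sum.inr (Sum.inr j) by
      simp [hij])
  have hXind : ∀ i j : ℕ, i ≠ j → IndepFun (X i) (X j) P := fun i j hij =>
    hindep.indepFun (show (Sum.inr (Sum.inl i) : Unit ⊕ ℕ ⊕ ℕ) ≠ Sum.inr (Sum.inl j) by
      simp [hij])
  -- ## moments of the X i
  have hXR : ∀ j, Measurable fun ω => (X j ω : ℝ) :=
    fun j => (Measurable.of_discrete (f := (Nat.cast : ℕ → ℝ))).comp (hXmeas j)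
  have hXint : ∀ j, Integrable (fun ω => (X j ω : ℝ)) P := by
    intro j
    refine Integrable.mono' (integrable_const ((k : ℕ) : ℝ)) (hXR j).aestronglyMeasurable
      ((hXbd j).mono fun ω h => ?_)
    rw [Real.norm_eq_abs, abs_of_nonneg (by positivity)]
    exact_mod_cast h
  have hXsqint : ∀ j, Integrable (fun ω => (X j ω : ℝ) ^ 2) P := by
    intro j
    refine Integrable.mono' (integrable_const (((k : ℕ) : ℝ) ^ 2))
      ((hXR j).pow_const 2).aestronglyMeasurable ((hXbd j).mono fun ω h => ?_)
    rw [Real.norm_eq_abs, abs_of_nonneg (by positivity)]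
    exact pow_le_pow_left₀ (by positivity) (by exact_mod_cast h) 2
  have hXmulint : ∀ i j, Integrable (fun ω => (X i ω : ℝ) * (X j ω : ℝ)) P := by
    intro i j
    refine Integrable.mono' (integrable_const (((k : ℕ) : ℝ) * ((k : ℕ) : ℝ)))
      ((hXR i).mul (hXR j)).aestronglyMeasurable
      (((hXbd i).and (hXbd j)).mono fun ω h => ?_)
    rw [Real.norm_eq_abs, abs_of_nonneg (by positivity)]
    exact mul_le_mul (by exact_mod_cast h.1) (by exact_mod_cast h.2) (by positivity)
      (by positivity)
  have hXmean : ∀ j, ∫ ω, (X j ω : ℝ) ∂P = EX := by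
    intro j
    have hpart := aux_hasSum_integral_partition (hXmeas j) (hXint j)
    have hpiece : ∀ m : ℕ, ∫ ω in {ω | X j ω = m}, (X j ω : ℝ) ∂P
        = (P {ω | X j ω = m}).toReal * m := by
      intro m
      have hcst : ∫ ω in {ω | X j ω = m}, (X j ω : ℝ) ∂P
          = ∫ _ω in {ω | X j ω = m}, (m : ℝ) ∂P :=
        setIntegral_congr_fun (hXsetM j m) (fun ω (hω : X j ω = m) => by rw [hω])
      rw [hcst, setIntegral_const, smul_eq_mul, measureReal_def]
    simp only [hpiece] at hpart
    have h0 : ∀ m ∉ Finset.range (k + 1), (P {ω | X j ω = m}).toReal * (m : ℝ) = 0 := by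
      intro m hm
      rw [hpXr j m, if_neg (by simp only [Finset.mem_range] at hm; omega)]
      ring
    have hfin := hasSum_sum_of_ne_finset_zero (s := Finset.range (k + 1)) (L := SummationFilter.unconditional ℕ) h0
    have hval : ∑ m ∈ Finset.range (k + 1), (P {ω | X j ω = m}).toReal * (m : ℝ) = EX := by
      have hcongr : ∀ m ∈ Finset.range (k + 1),
          (P {ω | X j ω = m}).toReal * (m : ℝ) = (k : ℝ)⁻¹ * m := by
        intro m hm
        rw [hpXr j m]
        by_cases h1 : m = 0
        · subst h1; simp
        · rw [if_pos ⟨Nat.one_le_iff_ne_zero.2 h1, by simp only [Finset.mem_range] at hm; omega⟩]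
      rw [Finset.sum_congr rfl hcongr, ← Finset.mul_sum, aux_sum_range_id, hEX]
      push_cast
      field_simp
      try ring
    rw [hval] at hfin
    exact hpart.unique hfin
  have hXsqmean : ∀ j, ∫ ω, (X j ω : ℝ) ^ 2 ∂P = EX2 := by
    intro j
    have hpart := aux_hasSum_integral_partition (hXmeas j) (hXsqint j)
    have hpiece : ∀ m : ℕ, ∫ ω in {ω | X j ω = m}, (X j ω : ℝ) ^ 2 ∂P
        = (P {ω | X j ω = m}).toReal * (m : ℝ) ^ 2 := by
      intro m
      have hcst : ∫ ω in {ω | X j ω = m}, (X j ω : ℝ) ^ 2 ∂P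
          = ∫ _ω in {ω | X j ω = m}, (m : ℝ) ^ 2 ∂P :=
        setIntegral_congr_fun (hXsetM j m) (fun ω (hω : X j ω = m) => by rw [hω])
      rw [hcst, setIntegral_const, smul_eq_mul, measureReal_def]
    simp only [hpiece] at hpart
    have h0 : ∀ m ∉ Finset.range (k + 1), (P {ω | X j ω = m}).toReal * (m : ℝ) ^ 2 = 0 := by
      intro m hm
      rw [hpXr j m, if_neg (by simp only [Finset.mem_range] at hm; omega)]
      ring
    have hfin := hasSum_sum_of_ne_finset_zero (s := Finset.range (k + 1)) (L := SummationFilter.unconditional ℕ) h0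
    have hval : ∑ m ∈ Finset.range (k + 1),
        (P {ω | X j ω = m}).toReal * (m : ℝ) ^ 2 = EX2 := by
      have hcongr : ∀ m ∈ Finset.range (k + 1),
          (P {ω | X j ω = m}).toReal * (m : ℝ) ^ 2 = (k : ℝ)⁻¹ * (m : ℝ) ^ 2 := by
        intro m hm
        rw [hpXr j m]
        by_cases h1 : m = 0
        · subst h1; simp
        · rw [if_pos ⟨Nat.one_le_iff_ne_zero.2 h1, by simp only [Finset.mem_range] at hm; omega⟩]
      rw [Finset.sum_congr rfl hcongr, ← Finset.mul_sum, aux_sum_range_sq, hEX2]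
      push_cast
      field_simp
      try ring
    rw [hval] at hfin
    exact hpart.unique hfin
  have hXdiag : ∀ j, ∫ ω, (X j ω : ℝ) * (X j ω : ℝ) ∂P = EX2 := by
    intro j
    have := hXsqmean j
    simpa [pow_two] using this
  have hXoffd : ∀ i j, i ≠ j → ∫ ω, (X i ω : ℝ) * (X j ω : ℝ) ∂P = EX ^ 2 := by
    intro i j hij
    have hind : IndepFun (fun ω => (X i ω : ℝ)) (fun ω => (X j ω : ℝ)) P :=
      (hXind i j hij).comp (Measurable.of_discrete (f := (Nat.cast : ℕ → ℝ)))
        (Measurable.of_discrete (f := (Nat.cast : ℕ → ℝ)))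
    have hmul := hind.integral_mul_eq_mul_integral (hXint i).aestronglyMeasurable (hXint j).aestronglyMeasurable
    calc ∫ ω, (X i ω : ℝ) * (X j ω : ℝ) ∂P
        = (∫ ω, (X i ω : ℝ) ∂P) * ∫ ω, (X j ω : ℝ) ∂P := hmul
      _ = EX ^ 2 := by rw [hXmean i, hXmean j, sq]
  -- ## moments of the Y i
  have hYmem : ∀ i, MemLp (Y i) 2 P := fun i => (hYident i).symm.memLp_snd hYsq
  have hYint : ∀ i, Integrable (Y i) P := fun i => (hYmem i).integrable one_le_two
  have hYmean : ∀ i, ∫ ω, Y i ω ∂P = μ1 := fun i => (hYident i).integral_eq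
  have hYsqmean : ∀ i, ∫ ω, Y i ω ^ 2 ∂P = Eq2 := fun i =>
    ((hYident i).comp (measurable_id.pow_const 2)).integral_eq
  have hYdiag : ∀ i, ∫ ω, Y i ω * Y i ω ∂P = Eq2 := by
    intro i
    have := hYsqmean i
    simpa [pow_two] using this
  have hYoffd : ∀ i j, i ≠ j → ∫ ω, Y i ω * Y j ω ∂P = μ1 ^ 2 := by
    intro i j hij
    have hmul := (hYind i j hij).integral_mul_eq_mul_integral (hYint i).aestronglyMeasurable (hYint j).aestronglyMeasurable
    calc ∫ ω, Y i ω * Y j ω ∂P = (∫ ω, Y i ω ∂P) * ∫ ω, Y j ω ∂P := hmul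
      _ = μ1 ^ 2 := by rw [hYmean i, hYmean j, sq]
  have hYmulint : ∀ i j, Integrable (fun ω => Y i ω * Y j ω) P := by
    intro i j
    by_cases h : i = j
    · subst h
      have := (hYmem i).integrable_sq
      simpa [pow_two] using this
    · exact (hYind i j h).integrable_mul (hYint i) (hYint j)
  have hEqge : μ1 ^ 2 ≤ Eq2 := by
    have hv := variance_nonneg (Y 0) P
    rw [variance_eq_sub hYsq] at hv
    simp only [Pi.pow_apply] at hv
    rw [hμ1, hEq2def]
    linarith
  -- ## sums of Y
  have hsumYmeas : ∀ n, Measurable fun ω => ∑ i ∈ Finset.range n, Y i ω :=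
    fun n => Finset.measurable_sum _ fun i _ => hYmeas i
  have hsumYblk : ∀ n, Measurable[mixBlk N X Y idxY] fun ω => ∑ i ∈ Finset.range n, Y i ω :=
    fun n => Finset.measurable_sum _ fun i _ => hYblk i
  have hsumYmem : ∀ n, MemLp (fun ω => ∑ i ∈ Finset.range n, Y i ω) 2 P :=
    fun n => memLp_finset_sum _ fun i _ => hYmem i
  have hsumYint : ∀ n, Integrable (fun ω => ∑ i ∈ Finset.range n, Y i ω) P :=
    fun n => integrable_finset_sum _ fun i _ => hYint i
  have hsumYsqint : ∀ n, Integrable (fun ω => (∑ i ∈ Finset.range n, Y i ω) ^ 2) P :=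
    fun n => (hsumYmem n).integrable_sq
  have hsumYmean : ∀ n : ℕ, ∫ ω, (∑ i ∈ Finset.range n, Y i ω) ∂P = n * μ1 := by
    intro n
    rw [integral_finset_sum _ fun i _ => hYint i,
      Finset.sum_congr rfl fun i _ => hYmean i, Finset.sum_const, Finset.card_range,
      nsmul_eq_mul]
  have hsumYsq : ∀ n : ℕ, ∫ ω, (∑ i ∈ Finset.range n, Y i ω) ^ 2 ∂P
      = (n : ℝ) ^ 2 * μ1 ^ 2 + n * (Eq2 - μ1 ^ 2) :=
    fun n => aux_integral_sq_sum n hYmulint μ1 Eq2 hYdiag hYoffd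
  -- ## sums of X (real valued)
  have hsumXint : ∀ n, Integrable (fun ω => ∑ j ∈ Finset.range n, (X j ω : ℝ)) P :=
    fun n => integrable_finset_sum _ fun j _ => hXint j
  have hsumXblk : ∀ n, Measurable[mixBlk N X Y idxX]
      fun ω => ∑ j ∈ Finset.range n, (X j ω : ℝ) :=
    fun n => Finset.measurable_sum _ fun j _ =>
      (Measurable.of_discrete (f := (Nat.cast : ℕ → ℝ))).comp (hXblk j)
  have hsumXsqint : ∀ n, Integrable (fun ω => (∑ j ∈ Finset.range n, (X j ω : ℝ)) ^ 2) P := by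
    intro n
    refine Integrable.mono' (integrable_const (((n : ℝ) * k) ^ 2))
      (((Finset.measurable_sum _ fun j _ => hXR j)).pow_const 2).aestronglyMeasurable
      (hXbdall.mono fun ω h => ?_)
    have hnn : 0 ≤ ∑ j ∈ Finset.range n, (X j ω : ℝ) :=
      Finset.sum_nonneg fun j _ => by positivity
    have hle : ∑ j ∈ Finset.range n, (X j ω : ℝ) ≤ (n : ℝ) * k := by
      calc ∑ j ∈ Finset.range n, (X j ω : ℝ) ≤ ∑ _j ∈ Finset.range n, (k : ℝ) :=
            Finset.sum_le_sum fun j _ => by exact_mod_cast h j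
        _ = (n : ℝ) * k := by rw [Finset.sum_const, Finset.card_range, nsmul_eq_mul]
    rw [Real.norm_eq_abs, abs_of_nonneg (by positivity)]
    exact pow_le_pow_left₀ hnn hle 2
  have hsumXsqblk : ∀ n, Measurable[mixBlk N X Y idxX]
      fun ω => (∑ j ∈ Finset.range n, (X j ω : ℝ)) ^ 2 :=
    fun n => (hsumXblk n).pow_const 2
  have hsumXmean : ∀ n : ℕ, ∫ ω, (∑ j ∈ Finset.range n, (X j ω : ℝ)) ∂P = n * EX := by
    intro n
    rw [integral_finset_sum _ fun j _ => hXint j,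
      Finset.sum_congr rfl fun j _ => hXmean j, Finset.sum_const, Finset.card_range,
      nsmul_eq_mul]
  have hsumXsq : ∀ n : ℕ, ∫ ω, (∑ j ∈ Finset.range n, (X j ω : ℝ)) ^ 2 ∂P
      = (n : ℝ) ^ 2 * EX ^ 2 + n * (EX2 - EX ^ 2) :=
    fun n => aux_integral_sq_sum n hXmulint EX EX2 hXdiag hXoffd
  -- ## Poisson moments
  have hexpcancel : Real.exp (-Λ) * Real.exp Λ = 1 := by
    rw [← Real.exp_add, neg_add_cancel, Real.exp_zero]
  have HN1 : HasSum (fun n : ℕ => (P {ω | N ω = n}).toReal * n) Λ := by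
    have h := (aux_hasSum_exp1 Λ).mul_left (Real.exp (-Λ))
    have hval : Real.exp (-Λ) * (Λ * Real.exp Λ) = Λ := by
      linear_combination Λ * hexpcancel
    rw [hval] at h
    exact aux_hasSum_congr h fun n => by rw [hpNr n]; ring
  have HN2 : HasSum (fun n : ℕ => (P {ω | N ω = n}).toReal * ((n : ℝ) * ((n : ℝ) - 1)))
      (Λ ^ 2) := by
    have h := (aux_hasSum_exp2 Λ).mul_left (Real.exp (-Λ))
    have hval : Real.exp (-Λ) * (Λ ^ 2 * Real.exp Λ) = Λ ^ 2 := by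
      linear_combination Λ ^ 2 * hexpcancel
    rw [hval] at h
    exact aux_hasSum_congr h fun n => by rw [hpNr n]; ring
  have HN2' : HasSum (fun n : ℕ => (P {ω | N ω = n}).toReal * (n : ℝ) ^ 2) (Λ ^ 2 + Λ) :=
    aux_hasSum_congr (HN2.add HN1) fun n => by ring
  -- summability for square moment (needed for finiteness)
  have hNsummable : Summable (fun n : ℕ => (n : ℝ) ^ 2
      * (Real.exp (-Λ) * Λ ^ n / n.factorial)) := by
    have h1 := (aux_hasSum_exp1 Λ).mul_left (Real.exp (-Λ))
    have h2 := (aux_hasSum_exp2 Λ).mul_left (Real.exp (-Λ))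
    exact ((h2.add h1).summable).congr fun n => by ring
  -- ## integrability of N and S (real casts)
  have hNR : Measurable fun ω => (N ω : ℝ) :=
    (Measurable.of_discrete (f := (Nat.cast : ℕ → ℝ))).comp hNmeas
  have hSR : Measurable fun ω => (S ω : ℝ) :=
    (Measurable.of_discrete (f := (Nat.cast : ℕ → ℝ))).comp hSmeas
  have hN2fin : ∫⁻ ω, ((N ω : ℝ≥0∞)) ^ 2 ∂P < ⊤ := by
    rw [aux_lintegral_nat_sq N hNmeas]
    have hterm : ∀ n : ℕ, (n : ℝ≥0∞) ^ 2 * P {ω | N ω = n}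
        = ENNReal.ofReal ((n : ℝ) ^ 2 * (Real.exp (-Λ) * Λ ^ n / n.factorial)) := by
      intro n
      rw [hNdist n, ← ENNReal.ofReal_natCast n, ← ENNReal.ofReal_pow (by positivity),
        ← ENNReal.ofReal_mul (by positivity)]
    rw [tsum_congr hterm, ← ENNReal.ofReal_tsum_of_nonneg (fun n => by positivity) hNsummable]
    exact ENNReal.ofReal_lt_top
  have hcastsq : ∀ (W : Ω → ℕ), (∀ ω : Ω, ((‖((W ω : ℕ) : ℝ) ^ 2‖₊ : ℝ≥0∞))
      = ((W ω : ℝ≥0∞)) ^ 2) := by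
    intro W ω
    rw [← enorm_eq_nnnorm, Real.enorm_eq_ofReal (sq_nonneg _), ENNReal.ofReal_pow (by positivity),
      ENNReal.ofReal_natCast]
  have hNmem2 : MemLp (fun ω => (N ω : ℝ)) 2 P := by
    refine (memLp_two_iff_integrable_sq hNR.aestronglyMeasurable).2 ?_
    refine ⟨(hNR.pow_const 2).aestronglyMeasurable, ?_⟩
    show (∫⁻ ω, (‖((N ω : ℕ) : ℝ) ^ 2‖₊ : ℝ≥0∞) ∂P) < ⊤
    rw [lintegral_congr (hcastsq N)]
    exact hN2fin
  have hSle : ∀ᵐ ω ∂P, S ω ≤ N ω * k := by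
    refine hXbdall.mono fun ω h => ?_
    calc S ω ≤ ∑ _j ∈ Finset.range (N ω), k := Finset.sum_le_sum fun j _ => h j
      _ = N ω * k := by rw [Finset.sum_const, Finset.card_range, smul_eq_mul]
  have hSmem2 : MemLp (fun ω => (S ω : ℝ)) 2 P := by
    refine MemLp.of_le (hNmem2.const_mul (k : ℝ)) hSR.aestronglyMeasurable
      (hSle.mono fun ω h => ?_)
    rw [Real.norm_eq_abs, Real.norm_eq_abs, abs_of_nonneg (by positivity),
      abs_of_nonneg (by positivity)]
    have h2 : (S ω : ℝ) ≤ (N ω : ℝ) * (k : ℝ) := by exact_mod_cast h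
    linarith
  have hSint : Integrable (fun ω => (S ω : ℝ)) P := hSmem2.integrable one_le_two
  have hSsqint : Integrable (fun ω => (S ω : ℝ) ^ 2) P := hSmem2.integrable_sq
  -- ## moments of S via the N-partition
  have hSmean : ∫ ω, (S ω : ℝ) ∂P = EX * Λ := by
    have hpart := aux_hasSum_integral_partition hNmeas hSint
    have hpiece : ∀ n : ℕ, ∫ ω in {ω | N ω = n}, (S ω : ℝ) ∂P
        = (P {ω | N ω = n}).toReal * ((n : ℝ) * EX) := by
      intro n
      have hcst : ∫ ω in {ω | N ω = n}, (S ω : ℝ) ∂P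
          = ∫ ω in {ω | N ω = n}, (∑ j ∈ Finset.range n, (X j ω : ℝ)) ∂P :=
        setIntegral_congr_fun (hNsetM n) (fun ω (hω : N ω = n) => by
          have h1 : S ω = ∑ j ∈ Finset.range n, X j ω := by simp only [hSdef]; rw [hω]
          show (S ω : ℝ) = ∑ j ∈ Finset.range n, (X j ω : ℝ)
          rw [h1]; push_cast; rfl)
      rw [hcst, keyX n _ (hsumXblk n) (hsumXint n), hsumXmean n]
    simp only [hpiece] at hpart
    have htarget : HasSum (fun n : ℕ => (P {ω | N ω = n}).toReal * ((n : ℝ) * EX)) (EX * Λ) :=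
      aux_hasSum_congr (HN1.mul_left EX) fun n => by ring
    exact hpart.unique htarget
  have hSsq : ∫ ω, (S ω : ℝ) ^ 2 ∂P = EX ^ 2 * (Λ ^ 2 + Λ) + (EX2 - EX ^ 2) * Λ := by
    have hpart := aux_hasSum_integral_partition hNmeas hSsqint
    have hpiece : ∀ n : ℕ, ∫ ω in {ω | N ω = n}, (S ω : ℝ) ^ 2 ∂P
        = (P {ω | N ω = n}).toReal * ((n : ℝ) ^ 2 * EX ^ 2 + n * (EX2 - EX ^ 2)) := by
      intro n
      have hcst : ∫ ω in {ω | N ω = n}, (S ω : ℝ) ^ 2 ∂P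
          = ∫ ω in {ω | N ω = n}, (∑ j ∈ Finset.range n, (X j ω : ℝ)) ^ 2 ∂P :=
        setIntegral_congr_fun (hNsetM n) (fun ω (hω : N ω = n) => by
          have h1 : S ω = ∑ j ∈ Finset.range n, X j ω := by simp only [hSdef]; rw [hω]
          show (S ω : ℝ) ^ 2 = (∑ j ∈ Finset.range n, (X j ω : ℝ)) ^ 2
          rw [h1]; push_cast; rfl)
      rw [hcst, keyX n _ (hsumXsqblk n) (hsumXsqint n), hsumXsq n]
    simp only [hpiece] at hpart
    have htarget : HasSum
        (fun n : ℕ => (P {ω | N ω = n}).toReal * ((n : ℝ) ^ 2 * EX ^ 2 + n * (EX2 - EX ^ 2)))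
        (EX ^ 2 * (Λ ^ 2 + Λ) + (EX2 - EX ^ 2) * Λ) :=
      aux_hasSum_congr ((HN2'.mul_left (EX ^ 2)).add (HN1.mul_left (EX2 - EX ^ 2)))
        fun n => by ring
    exact hpart.unique htarget
  -- ## S-partition sums
  have hSS1 : HasSum (fun m : ℕ => (P {ω | S ω = m}).toReal * m) (∫ ω, (S ω : ℝ) ∂P) := by
    have hpart := aux_hasSum_integral_partition hSmeas hSint
    have hpiece : ∀ m : ℕ, ∫ ω in {ω | S ω = m}, (S ω : ℝ) ∂P
        = (P {ω | S ω = m}).toReal * m := by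
      intro m
      have hcst : ∫ ω in {ω | S ω = m}, (S ω : ℝ) ∂P
          = ∫ _ω in {ω | S ω = m}, (m : ℝ) ∂P :=
        setIntegral_congr_fun (hSsetM m) (fun ω (hω : S ω = m) => by rw [hω])
      rw [hcst, setIntegral_const, smul_eq_mul, measureReal_def]
    simp only [hpiece] at hpart
    exact hpart
  have hSS2 : HasSum (fun m : ℕ => (P {ω | S ω = m}).toReal * (m : ℝ) ^ 2)
      (∫ ω, (S ω : ℝ) ^ 2 ∂P) := by
    have hpart := aux_hasSum_integral_partition hSmeas hSsqint
    have hpiece : ∀ m : ℕ, ∫ ω in {ω | S ω = m}, (S ω : ℝ) ^ 2 ∂P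
        = (P {ω | S ω = m}).toReal * (m : ℝ) ^ 2 := by
      intro m
      have hcst : ∫ ω in {ω | S ω = m}, (S ω : ℝ) ^ 2 ∂P
          = ∫ _ω in {ω | S ω = m}, (m : ℝ) ^ 2 ∂P :=
        setIntegral_congr_fun (hSsetM m) (fun ω (hω : S ω = m) => by rw [hω])
      rw [hcst, setIntegral_const, smul_eq_mul, measureReal_def]
    simp only [hpiece] at hpart
    exact hpart
  -- ## square-integrability of Z
  have hS2fin : ∑' m : ℕ, (m : ℝ≥0∞) ^ 2 * P {ω | S ω = m} < ⊤ := by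
    rw [← aux_lintegral_nat_sq S hSmeas]
    have hmono : ∫⁻ ω, ((S ω : ℝ≥0∞)) ^ 2 ∂P
        ≤ ∫⁻ ω, ((k : ℝ≥0∞) * (N ω : ℝ≥0∞)) ^ 2 ∂P := by
      refine lintegral_mono_ae (hSle.mono fun ω h => ?_)
      have h1 : (S ω : ℝ≥0∞) ≤ (k : ℝ≥0∞) * (N ω : ℝ≥0∞) := by
        calc (S ω : ℝ≥0∞) ≤ ((N ω * k : ℕ) : ℝ≥0∞) := Nat.cast_le.2 h
          _ = (k : ℝ≥0∞) * (N ω : ℝ≥0∞) := by push_cast; ring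
      exact pow_le_pow_left' h1 2
    refine lt_of_le_of_lt hmono ?_
    have heq : ∫⁻ ω, ((k : ℝ≥0∞) * (N ω : ℝ≥0∞)) ^ 2 ∂P
        = (k : ℝ≥0∞) ^ 2 * ∫⁻ ω, ((N ω : ℝ≥0∞)) ^ 2 ∂P := by
      simp_rw [mul_pow]
      exact lintegral_const_mul _
        ((Measurable.of_discrete (f := fun n : ℕ => ((n : ℝ≥0∞)) ^ 2)).comp hNmeas)
    rw [heq]
    exact ENNReal.mul_lt_top (ENNReal.pow_lt_top (ENNReal.natCast_lt_top k)) hN2fin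
  have hindY2 : ∀ m : ℕ, ∫⁻ ω in {ω | S ω = m},
        ENNReal.ofReal ((∑ i ∈ Finset.range m, Y i ω) ^ 2) ∂P
      = P {ω | S ω = m}
        * ∫⁻ ω, ENNReal.ofReal ((∑ i ∈ Finset.range m, Y i ω) ^ 2) ∂P := by
    intro m
    have hgY : Measurable[mixBlk N X Y idxY]
        fun ω => ENNReal.ofReal ((∑ i ∈ Finset.range m, Y i ω) ^ 2) :=
      ENNReal.measurable_ofReal.comp ((hsumYblk m).pow_const 2)
    have hgA : Measurable fun ω => ENNReal.ofReal ((∑ i ∈ Finset.range m, Y i ω) ^ 2) :=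
      ENNReal.measurable_ofReal.comp ((hsumYmeas m).pow_const 2)
    have hindf : IndepFun ({ω | S ω = m}.indicator (fun _ => (1 : ℝ≥0∞)))
        (fun ω => ENNReal.ofReal ((∑ i ∈ Finset.range m, Y i ω) ^ 2)) P :=
      aux_indepFun_of_measurable (mixBlk N X Y idxYᶜ) (mixBlk N X Y idxY) hIndep1
        ((measurable_const : Measurable[mixBlk N X Y idxYᶜ] fun _ : Ω => (1 : ℝ≥0∞)).indicator
          (hSblk (measurableSet_singleton m))) hgY
    calc ∫⁻ ω in {ω | S ω = m}, ENNReal.ofReal ((∑ i ∈ Finset.range m, Y i ω) ^ 2) ∂P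
        = ∫⁻ ω, ({ω | S ω = m}.indicator (fun _ => (1 : ℝ≥0∞)) *
            fun ω => ENNReal.ofReal ((∑ i ∈ Finset.range m, Y i ω) ^ 2)) ω ∂P := by
          rw [← lintegral_indicator (hSsetM m)]
          congr 1
          funext ω
          by_cases hω : ω ∈ {ω | S ω = m} <;> simp [Set.indicator, hω]
      _ = (∫⁻ ω, {ω | S ω = m}.indicator (fun _ => (1 : ℝ≥0∞)) ω ∂P)
            * ∫⁻ ω, ENNReal.ofReal ((∑ i ∈ Finset.range m, Y i ω) ^ 2) ∂P :=
          lintegral_mul_eq_lintegral_mul_lintegral_of_indepFun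
            (measurable_const.indicator (hSsetM m)) hgA hindf
      _ = P {ω | S ω = m} * ∫⁻ ω, ENNReal.ofReal ((∑ i ∈ Finset.range m, Y i ω) ^ 2) ∂P := by
          rw [lintegral_indicator_const (hSsetM m), one_mul]
  have hsq_le : ∀ m : ℕ, (m : ℝ) ^ 2 * μ1 ^ 2 + m * (Eq2 - μ1 ^ 2) ≤ (m : ℝ) ^ 2 * Eq2 := by
    intro m
    have hm : (m : ℝ) ≤ (m : ℝ) ^ 2 := by
      rcases Nat.eq_zero_or_pos m with h | h
      · simp [h]
      · have h1 : (1 : ℝ) ≤ (m : ℝ) := by exact_mod_cast h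
        nlinarith
    nlinarith
  have hZlint : ∫⁻ ω, ENNReal.ofReal (Z ω ^ 2) ∂P < ⊤ := by
    rw [aux_lintegral_partition S hSmeas]
    have hpiece : ∀ m : ℕ, ∫⁻ ω in {ω | S ω = m}, ENNReal.ofReal (Z ω ^ 2) ∂P
        ≤ ENNReal.ofReal Eq2 * ((m : ℝ≥0∞) ^ 2 * P {ω | S ω = m}) := by
      intro m
      have hcongr : ∫⁻ ω in {ω | S ω = m}, ENNReal.ofReal (Z ω ^ 2) ∂P
          = ∫⁻ ω in {ω | S ω = m},
              ENNReal.ofReal ((∑ i ∈ Finset.range m, Y i ω) ^ 2) ∂P :=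
        setLIntegral_congr_fun (hSsetM m)
          (fun ω (hω : S ω = m) => by simp only [hZapp ω, hω])
      have hofr : ∫⁻ ω, ENNReal.ofReal ((∑ i ∈ Finset.range m, Y i ω) ^ 2) ∂P
          = ENNReal.ofReal (∫ ω, (∑ i ∈ Finset.range m, Y i ω) ^ 2 ∂P) :=
        (ofReal_integral_eq_lintegral_ofReal (hsumYsqint m)
          (Filter.Eventually.of_forall fun ω => sq_nonneg _)).symm
      rw [hcongr, hindY2 m, hofr, hsumYsq m]
      calc P {ω | S ω = m} * ENNReal.ofReal ((m : ℝ) ^ 2 * μ1 ^ 2 + m * (Eq2 - μ1 ^ 2))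
          ≤ P {ω | S ω = m} * ENNReal.ofReal ((m : ℝ) ^ 2 * Eq2) :=
            mul_le_mul_right (ENNReal.ofReal_le_ofReal (hsq_le m)) _
        _ = ENNReal.ofReal Eq2 * ((m : ℝ≥0∞) ^ 2 * P {ω | S ω = m}) := by
            rw [ENNReal.ofReal_mul (by positivity), ENNReal.ofReal_pow (by positivity),
              ENNReal.ofReal_natCast]
            ring
    calc ∑' m : ℕ, ∫⁻ ω in {ω | S ω = m}, ENNReal.ofReal (Z ω ^ 2) ∂P
        ≤ ∑' m : ℕ, ENNReal.ofReal Eq2 * ((m : ℝ≥0∞) ^ 2 * P {ω | S ω = m}) :=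
          ENNReal.tsum_le_tsum hpiece
      _ = ENNReal.ofReal Eq2 * ∑' m : ℕ, (m : ℝ≥0∞) ^ 2 * P {ω | S ω = m} :=
          ENNReal.tsum_mul_left
      _ < ⊤ := ENNReal.mul_lt_top ENNReal.ofReal_lt_top hS2fin
  have hZ2int : Integrable (fun ω => Z ω ^ 2) P := by
    refine ⟨(hZmeas.pow_const 2).aestronglyMeasurable, ?_⟩
    show (∫⁻ ω, (‖Z ω ^ 2‖₊ : ℝ≥0∞) ∂P) < ⊤
    have hcongr : ∀ ω, ((‖Z ω ^ 2‖₊ : ℝ≥0∞)) = ENNReal.ofReal (Z ω ^ 2) :=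
      fun ω => Real.enorm_eq_ofReal (sq_nonneg _)
    rw [lintegral_congr hcongr]
    exact hZlint
  have hZmem2 : MemLp Z 2 P :=
    (memLp_two_iff_integrable_sq hZmeas.aestronglyMeasurable).2 hZ2int
  have hZint : Integrable Z P := hZmem2.integrable one_le_two
  -- ## mean of Z
  have hZmean : ∫ ω, Z ω ∂P = μ1 * (EX * Λ) := by
    have hpart := aux_hasSum_integral_partition hSmeas hZint
    have hpiece : ∀ m : ℕ, ∫ ω in {ω | S ω = m}, Z ω ∂P
        = μ1 * ((P {ω | S ω = m}).toReal * m) := by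
      intro m
      have hcst : ∫ ω in {ω | S ω = m}, Z ω ∂P
          = ∫ ω in {ω | S ω = m}, (∑ i ∈ Finset.range m, Y i ω) ∂P :=
        setIntegral_congr_fun (hSsetM m) (fun ω (hω : S ω = m) => by rw [hZapp ω, hω])
      rw [hcst, keyY m _ (hsumYblk m) (hsumYint m), hsumYmean m]
      ring
    simp only [hpiece] at hpart
    have htarget : HasSum (fun m : ℕ => μ1 * ((P {ω | S ω = m}).toReal * m))
        (μ1 * ∫ ω, (S ω : ℝ) ∂P) := hSS1.mul_left μ1
    rw [hpart.unique htarget, hSmean]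
  -- ## second moment of Z
  have hZsqmean : ∫ ω, Z ω ^ 2 ∂P
      = μ1 ^ 2 * (∫ ω, (S ω : ℝ) ^ 2 ∂P) + (Eq2 - μ1 ^ 2) * ∫ ω, (S ω : ℝ) ∂P := by
    have hpart := aux_hasSum_integral_partition hSmeas hZ2int
    have hpiece : ∀ m : ℕ, ∫ ω in {ω | S ω = m}, Z ω ^ 2 ∂P
        = μ1 ^ 2 * ((P {ω | S ω = m}).toReal * (m : ℝ) ^ 2)
          + (Eq2 - μ1 ^ 2) * ((P {ω | S ω = m}).toReal * m) := by
      intro m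
      have hcst : ∫ ω in {ω | S ω = m}, Z ω ^ 2 ∂P
          = ∫ ω in {ω | S ω = m}, (∑ i ∈ Finset.range m, Y i ω) ^ 2 ∂P :=
        setIntegral_congr_fun (hSsetM m) (fun ω (hω : S ω = m) => by rw [hZapp ω, hω])
      rw [hcst, keyY m _ ((hsumYblk m).pow_const 2) (hsumYsqint m), hsumYsq m]
      ring
    simp only [hpiece] at hpart
    have htarget := (hSS2.mul_left (μ1 ^ 2)).add (hSS1.mul_left (Eq2 - μ1 ^ 2))
    exact hpart.unique htarget
  -- ## conclusion
  rw [variance_eq_sub hZmem2]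
  have hZsq' : ∫ ω, (Z ^ 2) ω ∂P = ∫ ω, Z ω ^ 2 ∂P := by
    simp only [Pi.pow_apply]
  show (∫ ω, (Z ^ 2) ω ∂P) - (∫ ω, Z ω ∂P) ^ 2 - ∫ ω, Z ω ∂P = _
  rw [hZsq', hZsqmean, hZmean, hSmean, hSsq, hΛ, hEX, hEX2]
  field_simp
  ring
end

section
/- Let N be Poisson distributed with parameter kλt, let (X_i)_{i≥1} be i.i.d. uniform on {1,…,k}, and let (Y_i)_{i≥1} be i.i.d. ℕ-valued random variables with pmf q (ℙ[Y_i = n] = q_n), all mutually independent. Set Z(t) = ∑_{i=1}^{∑_{j=1}^{N} X_j} Y_i. Then for every u ∈ [0,1], 𝔼[u^{Z(t)}] = exp( λt · ( ∑_{m=1}^{k} G_Y(u)^m ) − kλt ), where G_Y(u) = 𝔼[u^{Y_1}] = ∑_{n=0}^{∞} q_n u^n. Equivalently, 𝔼[u^{Z(t)}] = exp( λkt · ∑_{j=0}^{∞} α_j (u^j − 1) ) with α_j = (1/k) ∑_{m=1}^{k} q^{*m}(j), where q^{*m} denotes the m-fold convolution of q. -/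
open MeasureTheory ProbabilityTheory
open scoped ENNReal NNReal

/-- `convPow q m` is the `m`-fold convolution `q^{*m}` of the pmf `q` on `ℕ`
(the pmf of the sum of `m` i.i.d. random variables with pmf `q`);
`q^{*0}` is the point mass at `0`. -/
noncomputable def convPow (q : ℕ → ℝ) : ℕ → ℕ → ℝ
  | 0 => fun j => if j = 0 then 1 else 0
  | m + 1 => fun j => ∑ i ∈ Finset.range (j + 1), q i * convPow q m (j - i)

lemma aux_meas_randsum {Ω : Type*} [MeasurableSpace Ω] {C : Ω → ℕ} {V : ℕ → Ω → ℕ}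
    (hC : Measurable C) (hV : ∀ i, Measurable (V i)) :
    Measurable fun ω => ∑ i ∈ Finset.range (C ω), V i ω := by
  apply measurable_to_countable'
  intro z
  have h : (fun ω => ∑ i ∈ Finset.range (C ω), V i ω) ⁻¹' {z}
      = ⋃ n, (C ⁻¹' {n}) ∩ ((fun ω => ∑ i ∈ Finset.range n, V i ω) ⁻¹' {z}) := by
    ext ω
    simp only [Set.mem_preimage, Set.mem_singleton_iff, Set.mem_iUnion, Set.mem_inter_iff]
    constructor
    · intro h; exact ⟨C ω, rfl, h⟩
    · rintro ⟨n, rfl, h⟩; exact h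
  rw [h]
  exact MeasurableSet.iUnion fun n => (hC (measurableSet_singleton n)).inter
    ((Finset.measurable_sum _ fun i _ => hV i) (measurableSet_singleton z))

lemma aux_expect_nat {Ω : Type*} [MeasurableSpace Ω] (P : Measure Ω) [IsProbabilityMeasure P]
    {W : Ω → ℕ} (hW : Measurable W) {g : ℕ → ℝ} (hg : ∀ n, ‖g n‖ ≤ 1) :
    ∫ ω, g (W ω) ∂P = ∑' n, (P {ω | W ω = n}).toReal * g n := by
  have hmap : IsProbabilityMeasure (P.map W) := Measure.isProbabilityMeasure_map hW.aemeasurable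
  have hint : Integrable g (P.map W) :=
    (integrable_const (1:ℝ)).mono' measurable_from_nat.aestronglyMeasurable (ae_of_all _ hg)
  rw [← integral_map hW.aemeasurable measurable_from_nat.aestronglyMeasurable,
    integral_countable' hint]
  refine tsum_congr fun n => ?_
  rw [measureReal_def, Measure.map_apply hW (measurableSet_singleton n), smul_eq_mul]
  congr 2

lemma aux_sum_pow {Ω : Type*} [MeasurableSpace Ω] {P : Measure Ω} [IsProbabilityMeasure P]
    {ι : Type*} {f : ι → Ω → ℕ} (hindep : iIndepFun f P)
    (hfmeas : ∀ i, Measurable (f i)) (e : ℕ → ι) (he : Function.Injective e)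
    (c G' : ℝ) (hE : ∀ i, ∫ ω, c ^ f (e i) ω ∂P = G') :
    ∀ n, ∫ ω, c ^ (∑ i ∈ Finset.range n, f (e i) ω) ∂P = G' ^ n := by
  intro n
  induction n with
  | zero => simp
  | succ n ih =>
    classical
    have hsum_meas : Measurable fun ω => ∑ i ∈ Finset.range n, f (e i) ω :=
      Finset.measurable_sum _ fun i _ => hfmeas (e i)
    have h := hindep.indepFun_finsetSum_of_notMem hfmeas
      (s := (Finset.range n).image e) (i := e n)
      (by simp [Finset.mem_image, he.eq_iff])
    have heq : (∑ j ∈ (Finset.range n).image e, f j)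
        = fun ω => ∑ i ∈ Finset.range n, f (e i) ω := by
      funext ω
      rw [Finset.sum_apply, Finset.sum_image (fun a _ b _ hab => he hab)]
    rw [heq] at h
    have h2 := h.comp (φ := fun m : ℕ => c ^ m) (ψ := fun m : ℕ => c ^ m)
      (measurable_from_nat : Measurable fun m : ℕ => c ^ m) (measurable_from_nat : Measurable fun m : ℕ => c ^ m)
    have hrw : (fun ω => c ^ (∑ i ∈ Finset.range (n+1), f (e i) ω))
        = fun ω => (c ^ ∑ i ∈ Finset.range n, f (e i) ω) * c ^ f (e n) ω := by
      funext ω; rw [Finset.sum_range_succ, pow_add]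
    have h3 := h2.integral_fun_mul_eq_mul_integral (measurable_from_nat.comp hsum_meas).aestronglyMeasurable
        (measurable_from_nat.comp (hfmeas (e n))).aestronglyMeasurable
    simp only [Function.comp_def] at h3
    rw [hrw, h3, ih, hE n, pow_succ]

lemma aux_convPow_nonneg {q : ℕ → ℝ} (hq : ∀ n, 0 ≤ q n) : ∀ m j, 0 ≤ convPow q m j := by
  intro m
  induction m with
  | zero => intro j; simp only [convPow]; split <;> norm_num
  | succ m ih => intro j; exact Finset.sum_nonneg fun i _ => mul_nonneg (hq i) (ih _)

lemma aux_convPow_pgf {q : ℕ → ℝ} (hq : ∀ n, 0 ≤ q n) (hqsum : Summable q)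
    {u : ℝ} (hu0 : 0 ≤ u) (hu1 : u ≤ 1) :
    ∀ m, Summable (fun j => convPow q m j * u ^ j) ∧
      ∑' j, convPow q m j * u ^ j = (∑' n, q n * u ^ n) ^ m := by
  have hqu : Summable fun n => q n * u ^ n :=
    hqsum.of_nonneg_of_le (fun n => mul_nonneg (hq n) (pow_nonneg hu0 n))
      (fun n => mul_le_of_le_one_right (hq n) (pow_le_one₀ hu0 hu1))
  have hqnorm : Summable fun n => ‖q n * u ^ n‖ := by
    simp only [Real.norm_eq_abs]; exact hqu.abs
  intro m
  induction m with
  | zero =>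
    constructor
    · apply summable_of_ne_finset_zero (s := {0})
      intro j hj
      simp only [Finset.mem_singleton] at hj
      simp [convPow, hj]
    · rw [tsum_eq_single 0 (by intro j hj; simp [convPow, hj])]
      simp [convPow]
  | succ m ih =>
    obtain ⟨hs, ht⟩ := ih
    have hnorm2 : Summable fun j => ‖convPow q m j * u ^ j‖ := by
      simp only [Real.norm_eq_abs]; exact hs.abs
    have key : ∀ j, convPow q (m+1) j * u ^ j
        = ∑ i ∈ Finset.range (j+1), (q i * u ^ i) * (convPow q m (j - i) * u ^ (j - i)) := by
      intro j
      show (∑ i ∈ Finset.range (j+1), q i * convPow q m (j-i)) * u ^ j = _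
      rw [Finset.sum_mul]
      refine Finset.sum_congr rfl fun i hi => ?_
      have hij : i ≤ j := Nat.lt_succ_iff.mp (Finset.mem_range.mp hi)
      have hpow : u ^ i * u ^ (j - i) = u ^ j := by
        rw [← pow_add, Nat.add_sub_cancel' hij]
      calc q i * convPow q m (j-i) * u ^ j
          = q i * convPow q m (j-i) * (u ^ i * u ^ (j - i)) := by rw [hpow]
        _ = (q i * u ^ i) * (convPow q m (j - i) * u ^ (j - i)) := by ring
    constructor
    · exact ((summable_norm_sum_mul_range_of_summable_norm hqnorm hnorm2).of_norm).congr
        fun j => (key j).symm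
    · rw [tsum_congr key, ← tsum_mul_tsum_eq_tsum_sum_range_of_summable_norm hqnorm hnorm2,
        ht, ← pow_succ']
/-- **Probability generating function of the compound Poisson process of order `k`**
with ℕ-valued compounding variables: for `u ∈ [0,1]`,
`𝔼[u^{Z(t)}] = exp(λ t ∑_{m=1}^k G_Y(u)^m − k λ t)` where `G_Y(u) = ∑_n q_n u^n`;
equivalently `𝔼[u^{Z(t)}] = exp(k λ t ∑_j α_j (u^j − 1))` with
`α_j = (1/k) ∑_{m=1}^k q^{*m}(j)`. -/
theorem cppok_pgf
    {Ω : Type*} [MeasurableSpace Ω] (P : Measure Ω) [IsProbabilityMeasure P]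
    (k : ℕ) (hk : 1 ≤ k) (lam t : ℝ) (hlam : 0 < lam) (ht : 0 < t)
    (N : Ω → ℕ) (X : ℕ → Ω → ℕ) (Y : ℕ → Ω → ℕ)
    (hNmeas : Measurable N) (hXmeas : ∀ i, Measurable (X i))
    (hYmeas : ∀ i, Measurable (Y i))
    (q : ℕ → ℝ) (hq : ∀ n, 0 ≤ q n)
    -- `N` is Poisson distributed with parameter `k λ t`
    (hNdist : ∀ n : ℕ, P {ω | N ω = n}
      = ENNReal.ofReal (Real.exp (-((k : ℝ) * lam * t)) * ((k : ℝ) * lam * t) ^ n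
          / (Nat.factorial n : ℝ)))
    -- each `X i` is uniformly distributed on `{1, …, k}`
    (hXdist : ∀ i, ∀ m : ℕ,
      P {ω | X i ω = m} = if 1 ≤ m ∧ m ≤ k then ((k : ℝ≥0∞))⁻¹ else 0)
    -- each `Y i` has pmf `q`
    (hYdist : ∀ i, ∀ n : ℕ, P {ω | Y i ω = n} = ENNReal.ofReal (q n))
    -- `N`, `(X i)` and `(Y i)` are mutually independent
    (hindep : iIndepFun
      (Sum.elim (fun _ : Unit => N) (Sum.elim X Y)) P) :
    ∀ u : ℝ, 0 ≤ u → u ≤ 1 →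
      (∫ ω, u ^ (∑ i ∈ Finset.range (∑ j ∈ Finset.range (N ω), X j ω), Y i ω) ∂P
          = Real.exp (lam * t * (∑ m ∈ Finset.Icc 1 k, (∑' n : ℕ, q n * u ^ n) ^ m)
              - (k : ℝ) * lam * t))
      ∧ (∫ ω, u ^ (∑ i ∈ Finset.range (∑ j ∈ Finset.range (N ω), X j ω), Y i ω) ∂P
          = Real.exp ((k : ℝ) * lam * t *
              ∑' j : ℕ, ((1 / (k : ℝ)) * ∑ m ∈ Finset.Icc 1 k, convPow q m j)
                * (u ^ j - 1))) := by
  classical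
  intro u hu0 hu1
  have hkne : (k : ℝ) ≠ 0 := Nat.cast_ne_zero.mpr (by omega)
  have hfmeas : ∀ i, Measurable (Sum.elim (fun _ : Unit => N) (Sum.elim X Y) i) := by
    rintro (x | j | i)
    · exact hNmeas
    · exact hXmeas j
    · exact hYmeas i
  -- facts about q
  have hq_enn : ∑' n, ENNReal.ofReal (q n) = 1 := by
    have hYdisj : Pairwise (Function.onFun Disjoint fun n : ℕ => {ω | Y 0 ω = n}) := by
      intro a b hab
      rw [Function.onFun, Set.disjoint_left]
      rintro ω h1 h2
      exact hab ((h1 : Y 0 ω = a).symm.trans h2)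
    have hm : ∀ n : ℕ, MeasurableSet {ω | Y 0 ω = n} :=
      fun n => hYmeas 0 (measurableSet_singleton n)
    have huniv : (⋃ n, {ω | Y 0 ω = n}) = Set.univ := by ext ω; simp
    calc ∑' n, ENNReal.ofReal (q n) = ∑' n, P {ω | Y 0 ω = n} :=
          tsum_congr fun n => (hYdist 0 n).symm
      _ = P (⋃ n, {ω | Y 0 ω = n}) := (measure_iUnion hYdisj hm).symm
      _ = 1 := by rw [huniv, measure_univ]
  have h2q : (fun n => (ENNReal.ofReal (q n)).toReal) = q :=
    funext fun n => ENNReal.toReal_ofReal (hq n)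
  have hqsum : Summable q := by
    have h := ENNReal.summable_toReal (f := fun n => ENNReal.ofReal (q n))
      (by rw [hq_enn]; exact ENNReal.one_ne_top)
    rwa [h2q] at h
  have hq1 : ∑' n, q n = 1 := by
    have h := congrArg ENNReal.toReal hq_enn
    rw [ENNReal.tsum_toReal_eq (fun n => ENNReal.ofReal_ne_top), h2q] at h
    simpa using h
  set G := ∑' n : ℕ, q n * u ^ n with hGdef
  have hqu : Summable fun n => q n * u ^ n :=
    hqsum.of_nonneg_of_le (fun n => mul_nonneg (hq n) (pow_nonneg hu0 n))
      (fun n => mul_le_of_le_one_right (hq n) (pow_le_one₀ hu0 hu1))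
  have hG0 : 0 ≤ G := tsum_nonneg fun n => mul_nonneg (hq n) (pow_nonneg hu0 n)
  have hG1 : G ≤ 1 := by
    calc G ≤ ∑' n, q n :=
          Summable.tsum_le_tsum (fun n => mul_le_of_le_one_right (hq n) (pow_le_one₀ hu0 hu1)) hqu hqsum
      _ = 1 := hq1
  -- expectations
  have hEY : ∀ i, ∫ ω, u ^ Y i ω ∂P = G := by
    intro i
    rw [aux_expect_nat P (hYmeas i) (g := fun n => u ^ n)
      (fun n => by
        rw [Real.norm_eq_abs, abs_of_nonneg (pow_nonneg hu0 n)]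
        exact pow_le_one₀ hu0 hu1)]
    exact tsum_congr fun n => by rw [hYdist i n, ENNReal.toReal_ofReal (hq n)]
  have hSsum : ∀ s, ∫ ω, u ^ (∑ i ∈ Finset.range s, Y i ω) ∂P = G ^ s :=
    fun s => aux_sum_pow hindep hfmeas (fun i => Sum.inr (Sum.inr i))
      (fun a b hab => by simpa using hab) u G hEY s
  set r := (∑ m ∈ Finset.Icc 1 k, G ^ m) / k with hrdef
  have hEX : ∀ j, ∫ ω, G ^ X j ω ∂P = r := by
    intro j
    rw [aux_expect_nat P (hXmeas j) (g := fun m => G ^ m)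
      (fun m => by
        rw [Real.norm_eq_abs, abs_of_nonneg (pow_nonneg hG0 m)]
        exact pow_le_one₀ hG0 hG1)]
    have hterm : ∀ m, (P {ω | X j ω = m}).toReal * G ^ m
        = (if 1 ≤ m ∧ m ≤ k then (k:ℝ)⁻¹ * G ^ m else 0) := by
      intro m
      rw [hXdist j m]
      split
      · rw [ENNReal.toReal_inv, ENNReal.toReal_natCast]
      · simp
    rw [tsum_congr hterm,
      tsum_eq_sum (s := Finset.Icc 1 k)
        (by intro m hm; rw [if_neg]; simpa [Finset.mem_Icc] using hm),
      Finset.sum_congr rfl (fun m hm => if_pos (Finset.mem_Icc.mp hm)),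
      ← Finset.mul_sum, hrdef, inv_mul_eq_div]
  have hMsum : ∀ n, ∫ ω, G ^ (∑ j ∈ Finset.range n, X j ω) ∂P = r ^ n :=
    fun n => aux_sum_pow hindep hfmeas (fun j => Sum.inr (Sum.inl j))
      (fun a b hab => by simpa using hab) G r hEX n
  -- measurability
  have hMmeas : ∀ n, Measurable fun ω => ∑ j ∈ Finset.range n, X j ω :=
    fun n => Finset.measurable_sum _ fun j _ => hXmeas j
  have hSmeas : ∀ s, Measurable fun ω => ∑ i ∈ Finset.range s, Y i ω :=
    fun s => Finset.measurable_sum _ fun i _ => hYmeas i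
  have hW2 : Measurable fun ω => ∑ j ∈ Finset.range (N ω), X j ω :=
    aux_meas_randsum hNmeas hXmeas
  have hZmeas : Measurable fun ω =>
      ∑ i ∈ Finset.range (∑ j ∈ Finset.range (N ω), X j ω), Y i ω :=
    aux_meas_randsum hW2 hYmeas
  set F := fun ω => u ^ (∑ i ∈ Finset.range (∑ j ∈ Finset.range (N ω), X j ω), Y i ω)
    with hFdef
  have hFmeas : Measurable F := measurable_from_nat.comp hZmeas
  have hFint : Integrable F P :=
    (integrable_const (1:ℝ)).mono' hFmeas.aestronglyMeasurable
      (ae_of_all _ fun ω => by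
        rw [Real.norm_eq_abs, abs_of_nonneg (pow_nonneg hu0 _)]
        exact pow_le_one₀ hu0 hu1)
  -- the partition
  set A : ℕ × ℕ → Set Ω := fun p =>
    (N ⁻¹' {p.1}) ∩ ((fun ω => ∑ j ∈ Finset.range p.1, X j ω) ⁻¹' {p.2}) with hAdef
  have hAmeas : ∀ p, MeasurableSet (A p) := fun p =>
    (hNmeas (measurableSet_singleton p.1)).inter ((hMmeas p.1) (measurableSet_singleton p.2))
  have hAdisj : Pairwise (Function.onFun Disjoint A) := by
    intro p pq hpq
    rw [Function.onFun, Set.disjoint_left]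
    rintro ω ⟨h1, h2⟩ ⟨h3, h4⟩
    simp only [Set.mem_preimage, Set.mem_singleton_iff] at h1 h2 h3 h4
    have e1 : p.1 = pq.1 := h1.symm.trans h3
    have e2 : p.2 = pq.2 := by rw [← h2, ← h4, e1]
    exact hpq (Prod.ext e1 e2)
  have hAuniv : (⋃ p, A p) = Set.univ := by
    ext ω
    simp only [Set.mem_iUnion, Set.mem_univ, iff_true]
    exact ⟨(N ω, ∑ j ∈ Finset.range (N ω), X j ω), ⟨rfl, rfl⟩⟩
  have hstep1 : ∫ ω, F ω ∂P = ∑' p : ℕ × ℕ, ∫ ω in A p, F ω ∂P := by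
    rw [← setIntegral_univ, ← hAuniv,
      integral_iUnion hAmeas hAdisj hFint.integrableOn]
  -- per-piece evaluation
  have hkey : ∀ p : ℕ × ℕ, ∫ ω in A p, F ω ∂P = (P (A p)).toReal * G ^ p.2 := by
    rintro ⟨n, s⟩
    have hmemA : ∀ ω, ω ∈ A (n, s) ↔ (N ω = n ∧ (∑ j ∈ Finset.range n, X j ω) = s) := by
      intro ω; simp [hAdef]
    have hcong : ∫ ω in A (n, s), F ω ∂P
        = ∫ ω in A (n, s), u ^ (∑ i ∈ Finset.range s, Y i ω) ∂P := by
      refine setIntegral_congr_fun (hAmeas (n, s)) fun ω hω => ?_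
      obtain ⟨h1, h2⟩ := (hmemA ω).mp hω
      simp only [hFdef]
      rw [h1, h2]
    set Sfin : Finset (Unit ⊕ ℕ ⊕ ℕ) :=
      insert (Sum.inl ()) ((Finset.range n).image fun j => Sum.inr (Sum.inl j)) with hSfin
    set Tfin : Finset (Unit ⊕ ℕ ⊕ ℕ) :=
      (Finset.range s).image fun i => Sum.inr (Sum.inr i) with hTfin
    have hST : Disjoint Sfin Tfin := by
      rw [Finset.disjoint_left]
      intro a ha hb
      rw [hTfin, Finset.mem_image] at hb
      obtain ⟨i, _, rfl⟩ := hb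
      simp [hSfin] at ha
    have base := hindep.indepFun_finset Sfin Tfin hST hfmeas
    have hmemN : (Sum.inl () : Unit ⊕ ℕ ⊕ ℕ) ∈ Sfin := Finset.mem_insert_self _ _
    have hmemX : ∀ j : ℕ, j ∈ Finset.range n →
        (Sum.inr (Sum.inl j) : Unit ⊕ ℕ ⊕ ℕ) ∈ Sfin :=
      fun j hj => Finset.mem_insert_of_mem (Finset.mem_image_of_mem _ hj)
    have hmemY : ∀ i : ℕ, i ∈ Finset.range s →
        (Sum.inr (Sum.inr i) : Unit ⊕ ℕ ⊕ ℕ) ∈ Tfin :=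
      fun i hi => Finset.mem_image_of_mem _ hi
    set φ : ({ x // x ∈ Sfin } → ℕ) → ℝ := fun v =>
      if (v ⟨Sum.inl (), hmemN⟩ = n ∧
          (∑ j ∈ (Finset.range n).attach, v ⟨Sum.inr (Sum.inl j.1), hmemX j.1 j.2⟩) = s)
      then 1 else 0 with hφdef
    set ψ : ({ x // x ∈ Tfin } → ℕ) → ℝ := fun w =>
      u ^ (∑ i ∈ (Finset.range s).attach, w ⟨Sum.inr (Sum.inr i.1), hmemY i.1 i.2⟩) with hψdef
    have hcomp := base.comp (measurable_of_countable φ) (measurable_of_countable ψ)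
    have hleft : (φ ∘ fun ω (i : Sfin) => Sum.elim (fun _ : Unit => N) (Sum.elim X Y) i ω)
        = (A (n, s)).indicator (fun _ => (1:ℝ)) := by
      funext ω
      show (if (N ω = n ∧ (∑ j ∈ (Finset.range n).attach, X j.1 ω) = s) then (1:ℝ) else 0)
        = (A (n, s)).indicator (fun _ => (1:ℝ)) ω
      rw [Finset.sum_attach (Finset.range n) (fun j => X j ω)]
      by_cases h : ω ∈ A (n, s)
      · rw [Set.indicator_of_mem h, if_pos ((hmemA ω).mp h)]
      · rw [Set.indicator_of_notMem h, if_neg (fun hc => h ((hmemA ω).mpr hc))]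
    have hright : (ψ ∘ fun ω (i : Tfin) => Sum.elim (fun _ : Unit => N) (Sum.elim X Y) i ω)
        = fun ω => u ^ (∑ i ∈ Finset.range s, Y i ω) := by
      funext ω
      show u ^ (∑ i ∈ (Finset.range s).attach, Y i.1 ω) = _
      rw [Finset.sum_attach (Finset.range s) (fun i => Y i ω)]
    rw [hleft, hright] at hcomp
    have hind_int : ∫ ω in A (n, s), u ^ (∑ i ∈ Finset.range s, Y i ω) ∂P
        = (P (A (n, s))).toReal * G ^ s := by
      rw [← integral_indicator (hAmeas (n, s))]
      have hsplit : (A (n, s)).indicator (fun ω => u ^ (∑ i ∈ Finset.range s, Y i ω))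
          = fun ω => (A (n, s)).indicator (fun _ => (1:ℝ)) ω
              * u ^ (∑ i ∈ Finset.range s, Y i ω) := by
        funext ω
        by_cases h : ω ∈ A (n, s) <;>
          simp [Set.indicator_of_mem, Set.indicator_of_notMem, h]
      rw [hsplit, hcomp.integral_fun_mul_eq_mul_integral
        (measurable_const.indicator (hAmeas (n, s))).aestronglyMeasurable
        (measurable_from_nat.comp (hSmeas s)).aestronglyMeasurable,
        integral_indicator_const _ (hAmeas (n, s)), hSsum s, smul_eq_mul, mul_one, measureReal_def]
    rw [hcong, hind_int]
  -- factorization of P (A p)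
  have hNM : ∀ n, IndepFun (fun ω => ∑ j ∈ Finset.range n, X j ω) N P := by
    intro n
    have h := hindep.indepFun_finsetSum_of_notMem hfmeas
      (s := (Finset.range n).image fun j => Sum.inr (Sum.inl j)) (i := Sum.inl ())
      (by simp)
    have heq : (∑ j ∈ (Finset.range n).image (fun j => (Sum.inr (Sum.inl j) : Unit ⊕ ℕ ⊕ ℕ)),
          Sum.elim (fun _ : Unit => N) (Sum.elim X Y) j)
        = fun ω => ∑ j ∈ Finset.range n, X j ω := by
      funext ω
      rw [Finset.sum_apply, Finset.sum_image (by intro a _ b _ hab; simpa using hab)]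
      rfl
    rwa [heq] at h
  have hPA_toReal : ∀ p : ℕ × ℕ, (P (A p)).toReal
      = (P {ω | N ω = p.1}).toReal
        * (P {ω | (∑ j ∈ Finset.range p.1, X j ω) = p.2}).toReal := by
    rintro ⟨n, s⟩
    have h := (hNM n).measure_inter_preimage_eq_mul {s} {n}
      (measurableSet_singleton s) (measurableSet_singleton n)
    have hset : A (n, s) = ((fun ω => ∑ j ∈ Finset.range n, X j ω) ⁻¹' {s}) ∩ (N ⁻¹' {n}) := by
      rw [hAdef]; exact Set.inter_comm _ _
    rw [hset, h, ENNReal.toReal_mul, mul_comm]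
    rfl
  -- summability
  have hPAsum : ∑' p, P (A p) = 1 := by
    rw [← measure_iUnion hAdisj hAmeas, hAuniv, measure_univ]
  have hsum1 : Summable fun p : ℕ × ℕ => (P (A p)).toReal :=
    ENNReal.summable_toReal (by rw [hPAsum]; exact ENNReal.one_ne_top)
  have hsum2 : Summable fun p : ℕ × ℕ => (P (A p)).toReal * G ^ p.2 :=
    Summable.of_nonneg_of_le
      (fun p => mul_nonneg ENNReal.toReal_nonneg (pow_nonneg hG0 _))
      (fun p => mul_le_of_le_one_right ENNReal.toReal_nonneg (pow_le_one₀ hG0 hG1)) hsum1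
  set g2 : ℕ × ℕ → ℝ := fun p => (P {ω | N ω = p.1}).toReal
      * ((P {ω | (∑ j ∈ Finset.range p.1, X j ω) = p.2}).toReal * G ^ p.2) with hg2def
  have hg2eq : ∀ p, (P (A p)).toReal * G ^ p.2 = g2 p := fun p => by
    rw [hg2def, hPA_toReal p, mul_assoc]
  have hg2sum : Summable g2 := hsum2.congr hg2eq
  -- the main computation
  have hmain : ∫ ω, F ω ∂P = ∑' n : ℕ, (P {ω | N ω = n}).toReal * r ^ n := by
    rw [hstep1, tsum_congr hkey, tsum_congr hg2eq,
      Summable.tsum_prod' hg2sum (fun n => hg2sum.prod_factor n)]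
    refine tsum_congr fun n => ?_
    rw [hg2def]
    simp only
    rw [tsum_mul_left]
    congr 1
    rw [← hMsum n, aux_expect_nat P (hMmeas n) (g := fun m => G ^ m)
      (fun m => by
        rw [Real.norm_eq_abs, abs_of_nonneg (pow_nonneg hG0 m)]
        exact pow_le_one₀ hG0 hG1)]
  -- Poisson summation
  have hfinal1 : ∫ ω, F ω ∂P
      = Real.exp (lam * t * (∑ m ∈ Finset.Icc 1 k, G ^ m) - (k:ℝ) * lam * t) := by
    rw [hmain]
    have hterm : ∀ n : ℕ, (P {ω | N ω = n}).toReal * r ^ n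
        = Real.exp (-((k:ℝ) * lam * t)) * (((k:ℝ) * lam * t * r) ^ n / n.factorial) := by
      intro n
      rw [hNdist n, ENNReal.toReal_ofReal (by positivity), mul_pow, mul_pow]
      ring
    rw [tsum_congr hterm, tsum_mul_left]
    have hexp : ∑' n : ℕ, ((k:ℝ) * lam * t * r) ^ n / n.factorial
        = Real.exp ((k:ℝ) * lam * t * r) := by
      rw [Real.exp_eq_exp_ℝ, NormedSpace.exp_eq_tsum_div]
    rw [hexp, ← Real.exp_add]
    congr 1
    have hcr : (k:ℝ) * lam * t * r = lam * t * (∑ m ∈ Finset.Icc 1 k, G ^ m) := by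
      rw [hrdef]
      field_simp
    rw [hcr]
    ring
  -- second form of the exponent
  have hconv := aux_convPow_pgf hq hqsum hu0 hu1
  have hconv1 := aux_convPow_pgf hq hqsum (u := 1) zero_le_one le_rfl
  have hconvsum1 : ∀ m, Summable fun j => convPow q m j := by
    intro m
    have h := (hconv1 m).1
    simpa using h
  have hconvtsum1 : ∀ m, ∑' j, convPow q m j = 1 := by
    intro m
    have h := (hconv1 m).2
    simpa [hq1] using h
  have hexp_eq : (k:ℝ) * lam * t *
        ∑' j : ℕ, ((1 / (k : ℝ)) * ∑ m ∈ Finset.Icc 1 k, convPow q m j) * (u ^ j - 1)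
      = lam * t * (∑ m ∈ Finset.Icc 1 k, G ^ m) - (k:ℝ) * lam * t := by
    have hA : ∀ j : ℕ, ((1 / (k:ℝ)) * ∑ m ∈ Finset.Icc 1 k, convPow q m j) * (u ^ j - 1)
        = (1 / (k:ℝ)) * ((∑ m ∈ Finset.Icc 1 k, convPow q m j * u ^ j)
            - (∑ m ∈ Finset.Icc 1 k, convPow q m j)) := by
      intro j
      rw [← Finset.sum_mul]
      ring
    have hs1 : Summable fun j => ∑ m ∈ Finset.Icc 1 k, convPow q m j * u ^ j :=
      summable_sum fun m _ => (hconv m).1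
    have hs2 : Summable fun j => ∑ m ∈ Finset.Icc 1 k, convPow q m j :=
      summable_sum fun m _ => hconvsum1 m
    have ht1 : ∑' j : ℕ, ∑ m ∈ Finset.Icc 1 k, convPow q m j * u ^ j
        = ∑ m ∈ Finset.Icc 1 k, G ^ m := by
      rw [Summable.tsum_finsetSum fun m _ => (hconv m).1]
      exact Finset.sum_congr rfl fun m _ => (hconv m).2
    have ht2 : ∑' j : ℕ, ∑ m ∈ Finset.Icc 1 k, convPow q m j = (k : ℝ) := by
      rw [Summable.tsum_finsetSum fun m _ => hconvsum1 m]
      rw [Finset.sum_congr rfl fun m _ => hconvtsum1 m]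
      simp [Nat.card_Icc]
    rw [tsum_congr hA, tsum_mul_left, Summable.tsum_sub hs1 hs2, ht1, ht2]
    field_simp
  refine ⟨hfinal1, ?_⟩
  rw [hfinal1, hexp_eq]
end

section
/- Let N be Poisson distributed with parameter kλt, let (X_i)_{i≥1} be i.i.d. uniform on {1,…,k}, and let (Y_i)_{i≥1} be i.i.d. ℕ-valued random variables with pmf q, all mutually independent, and set Z(t) = ∑_{i=1}^{∑_{j=1}^{N} X_j} Y_i. Independently, let M be Poisson distributed with parameter kλt and (W_j)_{j≥1} i.i.d. ℕ-valued with pmf α given by α_j = (1/k) ∑_{m=1}^{k} q^{*m}(j) (equivalently, W_j is distributed as ∑_{i=1}^{U} Y'_i for U uniform on {1,…,k} independent of i.i.d. copies Y'_i of Y_1), with M and (W_j) independent. Then Z(t) and D(t) = ∑_{j=1}^{M} W_j have the same distribution: ℙ[Z(t) = n] = ℙ[D(t) = n] for all n ∈ ℕ. In particular, the compound Poisson process of order k with ℕ-valued compounding variables is a compound Poisson process, hence a Lévy process and infinitely divisible. -/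
open MeasureTheory ProbabilityTheory
open scoped ENNReal NNReal

lemma convPow_zero (q : ℕ → ℝ) (n : ℕ) : convPow q 0 n = if n = 0 then 1 else 0 := rfl

lemma convPow_succ (q : ℕ → ℝ) (m n : ℕ) :
    convPow q (m + 1) n = ∑ i ∈ Finset.range (n + 1), q i * convPow q m (n - i) := rfl

lemma convPow_nonneg {q : ℕ → ℝ} (hq : ∀ n, 0 ≤ q n) (m n : ℕ) : 0 ≤ convPow q m n := by
  induction m generalizing n with
  | zero => rw [convPow_zero]; positivity
  | succ m ih =>
    rw [convPow_succ]
    exact Finset.sum_nonneg fun i _ => mul_nonneg (hq i) (ih _)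

lemma convPow_coeff (q : ℕ → ℝ) (m n : ℕ) :
    convPow q m n = PowerSeries.coeff n (PowerSeries.mk q ^ m) := by
  induction m generalizing n with
  | zero => simp [convPow_zero, PowerSeries.coeff_one]
  | succ m ih =>
    rw [convPow_succ, pow_succ', PowerSeries.coeff_mul,
      Finset.Nat.sum_antidiagonal_eq_sum_range_succ_mk]
    exact Finset.sum_congr rfl fun i _ => by rw [PowerSeries.coeff_mk, ih]

lemma convPow_add (q : ℕ → ℝ) (a b n : ℕ) :
    ∑ i ∈ Finset.range (n + 1), convPow q a i * convPow q b (n - i) = convPow q (a + b) n := by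
  rw [convPow_coeff, pow_add, PowerSeries.coeff_mul,
    Finset.Nat.sum_antidiagonal_eq_sum_range_succ_mk]
  exact Finset.sum_congr rfl fun i _ => by rw [convPow_coeff, convPow_coeff]

lemma convPow_support {u : ℕ → ℝ} {k : ℕ} (hu : ∀ j, k < j → u j = 0) :
    ∀ m s, k * m < s → convPow u m s = 0 := by
  intro m
  induction m with
  | zero => intro s hs; rw [convPow_zero, if_neg]; omega
  | succ m ih =>
    intro s hs
    rw [convPow_succ]
    apply Finset.sum_eq_zero
    intro i hi
    rcases le_or_gt i k with h | h
    · have hs' : k * m + k < s := by rw [Nat.mul_succ] at hs; exact hs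
      rw [ih (s - i) (by omega), mul_zero]
    · rw [hu i h, zero_mul]

noncomputable def unifPmf (k : ℕ) : ℕ → ℝ := fun j => if 1 ≤ j ∧ j ≤ k then 1 / (k : ℝ) else 0

lemma unifPmf_nonneg (k : ℕ) (j : ℕ) : 0 ≤ unifPmf k j := by
  unfold unifPmf; split <;> positivity

lemma unifPmf_support (k : ℕ) : ∀ j, k < j → unifPmf k j = 0 := by
  intro j hj; unfold unifPmf; rw [if_neg]; omega

noncomputable def alphaPmf (q : ℕ → ℝ) (k : ℕ) : ℕ → ℝ :=
  fun n => (1 / (k : ℝ)) * ∑ m ∈ Finset.Icc 1 k, convPow q m n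

lemma alphaPmf_nonneg {q : ℕ → ℝ} (hq : ∀ n, 0 ≤ q n) (k n : ℕ) : 0 ≤ alphaPmf q k n := by
  unfold alphaPmf
  apply mul_nonneg (by positivity)
  exact Finset.sum_nonneg fun m _ => convPow_nonneg hq m n

lemma alphaPmf_apply (q : ℕ → ℝ) (k : ℕ) (n : ℕ) :
    alphaPmf q k n = ∑ j ∈ Finset.range (k + 1), unifPmf k j * convPow q j n := by
  have hins : Finset.range (k + 1) = insert 0 (Finset.Icc 1 k) := by
    ext x; simp [Finset.mem_range, Finset.mem_Icc]; omega
  rw [hins, Finset.sum_insert (by simp), alphaPmf]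
  have h0 : unifPmf k 0 = 0 := by unfold unifPmf; rw [if_neg]; omega
  rw [h0, zero_mul, zero_add, Finset.mul_sum]
  refine Finset.sum_congr rfl fun j hj => ?_
  rw [Finset.mem_Icc] at hj
  unfold unifPmf
  rw [if_pos hj]

lemma key_identity {q : ℕ → ℝ} (k : ℕ) :
    ∀ m n, convPow (alphaPmf q k) m n
      = ∑ s ∈ Finset.range (k * m + 1), convPow (unifPmf k) m s * convPow q s n := by
  intro m
  induction m with
  | zero => intro n; simp [convPow_zero]
  | succ m ih =>
    intro n
    rw [convPow_succ]
    have step1 : ∀ i, alphaPmf q k i = ∑ j ∈ Finset.range (k + 1), unifPmf k j * convPow q j i :=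
      alphaPmf_apply q k
    calc ∑ i ∈ Finset.range (n + 1), alphaPmf q k i * convPow (alphaPmf q k) m (n - i)
        = ∑ i ∈ Finset.range (n + 1), ∑ j ∈ Finset.range (k + 1),
            ∑ s ∈ Finset.range (k * m + 1),
            (unifPmf k j * convPow (unifPmf k) m s) * (convPow q j i * convPow q s (n - i)) := by
          refine Finset.sum_congr rfl fun i _ => ?_
          rw [step1, ih, Finset.sum_mul]
          refine Finset.sum_congr rfl fun j _ => ?_
          rw [Finset.mul_sum]
          refine Finset.sum_congr rfl fun s _ => ?_
          ring
      _ = ∑ j ∈ Finset.range (k + 1), ∑ s ∈ Finset.range (k * m + 1),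
            (unifPmf k j * convPow (unifPmf k) m s) * convPow q (j + s) n := by
          rw [Finset.sum_comm]
          refine Finset.sum_congr rfl fun j _ => ?_
          rw [Finset.sum_comm]
          refine Finset.sum_congr rfl fun s _ => ?_
          rw [← Finset.mul_sum]
          congr 1
          rw [convPow_add]
      _ = ∑ s' ∈ Finset.range (k * (m + 1) + 1),
            convPow (unifPmf k) (m + 1) s' * convPow q s' n := by
          have hr : ∑ s' ∈ Finset.range (k * (m + 1) + 1),
              convPow (unifPmf k) (m + 1) s' * convPow q s' n
              = ∑ s' ∈ Finset.range (k * (m + 1) + 1), ∑ j ∈ Finset.range (s' + 1),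
                  unifPmf k j * convPow (unifPmf k) m (s' - j) * convPow q s' n := by
            refine Finset.sum_congr rfl fun s' _ => ?_
            rw [convPow_succ, Finset.sum_mul]
          rw [hr, Finset.sum_sigma', Finset.sum_sigma']
          refine Finset.sum_bij_ne_zero (fun p _ _ => ⟨p.1 + p.2, p.1⟩) ?_ ?_ ?_ ?_
          · rintro ⟨j, s⟩ h₁ h₂
            simp only [Finset.mem_sigma, Finset.mem_range] at h₁ ⊢
            constructor
            · have : k * (m + 1) = k * m + k := by ring
              omega
            · omega
          · rintro ⟨j, s⟩ h₁ h₂ ⟨j', s'⟩ h₁' h₂' heq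
            simp only [Sigma.mk.inj_iff, heq_eq_eq] at heq
            obtain ⟨h1, h2⟩ := heq
            have : s = s' := by omega
            simp_all
          · rintro ⟨s', j⟩ hb hnz
            simp only [Finset.mem_sigma, Finset.mem_range] at hb
            have hj : j ≤ k := by
              by_contra hc
              push_neg at hc
              rw [unifPmf_support k j hc, zero_mul, zero_mul] at hnz
              exact hnz rfl
            have hs : s' - j ≤ k * m := by
              by_contra hc
              push_neg at hc
              rw [convPow_support (unifPmf_support k) m (s' - j) hc, mul_zero, zero_mul] at hnz
              exact hnz rfl
            refine ⟨⟨j, s' - j⟩, ?_, ?_, ?_⟩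
            · simp only [Finset.mem_sigma, Finset.mem_range]; omega
            · have hjs : j + (s' - j) = s' := by omega
              rw [hjs]
              exact hnz
            · simp only [Sigma.mk.inj_iff, heq_eq_eq]
              constructor
              · omega
              · trivial
          · rintro ⟨j, s⟩ h₁ h₂
            simp only
            have : j + s - j = s := by omega
            rw [this]

lemma iIndepFun_precomp {Ω ι ι' β : Type*} [MeasurableSpace Ω] {P : Measure Ω}
    [mβ : MeasurableSpace β] {f : ι → Ω → β} (g : ι' → ι) (hg : Function.Injective g)
    (h : iIndepFun f P) :
    iIndepFun (fun i => f (g i)) P := by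
  classical
  rw [iIndepFun_iff_measure_inter_preimage_eq_mul] at h ⊢
  intro S sets hsets
  set sets' : ι → Set β := fun i =>
    if h' : ∃ i' ∈ S, g i' = i then sets h'.choose else Set.univ with hsets'def
  have key : ∀ i' ∈ S, sets' (g i') = sets i' := by
    intro i' hi'
    have hex : ∃ j ∈ S, g j = g i' := ⟨i', hi', rfl⟩
    have hch : hex.choose = i' := hg hex.choose_spec.2
    simp only [hsets'def, dif_pos hex, hch]
  have hmeas' : ∀ i, i ∈ S.map ⟨g, hg⟩ → MeasurableSet (sets' i) := by
    intro i _
    by_cases h' : ∃ i' ∈ S, g i' = i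
    · simp only [hsets'def, dif_pos h']
      exact hsets _ h'.choose_spec.1
    · simp only [hsets'def, dif_neg h']
      exact MeasurableSet.univ
  have := h (S.map ⟨g, hg⟩) hmeas'
  rw [Finset.prod_map] at this
  have hint : (⋂ i ∈ S.map ⟨g, hg⟩, f i ⁻¹' sets' i) = ⋂ i' ∈ S, f (g i') ⁻¹' sets i' := by
    ext x
    simp only [Set.mem_iInter, Finset.mem_map, Function.Embedding.coeFn_mk]
    constructor
    · intro hx i' hi'
      have := hx (g i') ⟨i', hi', rfl⟩
      rwa [key i' hi'] at this
    · rintro hx i ⟨i', hi', rfl⟩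
      rw [key i' hi']
      exact hx i' hi'
  rw [hint] at this
  rw [this]
  refine Finset.prod_congr rfl fun i' hi' => ?_
  simp only [Function.Embedding.coeFn_mk]
  rw [key i' hi']

lemma sum_pmf {Ω : Type*} [MeasurableSpace Ω] (P : Measure Ω) [IsProbabilityMeasure P]
    (f : ℕ → Ω → ℕ) (hmeas : ∀ i, Measurable (f i))
    (hind : iIndepFun f P)
    (p : ℕ → ℝ) (hp : ∀ n, 0 ≤ p n)
    (hdist : ∀ i n, P (f i ⁻¹' {n}) = ENNReal.ofReal (p n)) :
    ∀ s n, P ((fun ω => ∑ i ∈ Finset.range s, f i ω) ⁻¹' {n}) = ENNReal.ofReal (convPow p s n) := by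
  intro s
  induction s with
  | zero =>
    intro n
    rcases eq_or_ne n 0 with rfl | hn
    · have : ((fun ω => ∑ i ∈ Finset.range 0, f i ω) ⁻¹' {0}) = Set.univ := by
        ext ω; simp
      rw [this, measure_univ, convPow_zero, if_pos rfl, ENNReal.ofReal_one]
    · have : ((fun ω => ∑ i ∈ Finset.range 0, f i ω) ⁻¹' {n}) = ∅ := by
        ext ω; simp [hn.symm]
      rw [this, measure_empty, convPow_zero, if_neg hn, ENNReal.ofReal_zero]
  | succ s ih =>
    intro n
    have hsum_meas : Measurable (fun ω => ∑ i ∈ Finset.range s, f i ω) :=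
      Finset.measurable_sum _ fun i _ => hmeas i
    have hdecomp : ((fun ω => ∑ i ∈ Finset.range (s + 1), f i ω) ⁻¹' {n})
        = ⋃ j ∈ Finset.range (n + 1),
            ((fun ω => ∑ i ∈ Finset.range s, f i ω) ⁻¹' {n - j} ∩ f s ⁻¹' {j}) := by
      ext ω
      simp only [Set.mem_preimage, Set.mem_singleton_iff, Set.mem_iUnion, Set.mem_inter_iff,
        Finset.mem_range, Finset.sum_range_succ]
      constructor
      · intro h
        exact ⟨f s ω, by omega, by omega, rfl⟩
      · rintro ⟨j, hj, h1, rfl⟩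
        omega
    have hindep : IndepFun (fun ω => ∑ i ∈ Finset.range s, f i ω) (f s) P := by
      have := hind.indepFun_finsetSum_of_notMem hmeas (s := Finset.range s) (i := s)
        (by simp)
      have heq : (∑ j ∈ Finset.range s, f j) = fun ω => ∑ i ∈ Finset.range s, f i ω := by
        funext ω; rw [Finset.sum_apply]
      rwa [heq] at this
    rw [hdecomp, measure_biUnion_finset ?hd ?hm]
    case hd =>
      intro j hj j' hj' hne
      simp only [Function.onFun]
      apply Set.disjoint_left.mpr
      rintro ω ⟨_, h2⟩ ⟨_, h2'⟩
      simp only [Set.mem_preimage, Set.mem_singleton_iff] at h2 h2'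
      exact hne (h2 ▸ h2')
    case hm =>
      intro j _
      exact (hsum_meas (measurableSet_singleton _)).inter ((hmeas s) (measurableSet_singleton _))
    have hterm : ∀ j ∈ Finset.range (n + 1),
        P ((fun ω => ∑ i ∈ Finset.range s, f i ω) ⁻¹' {n - j} ∩ f s ⁻¹' {j})
          = ENNReal.ofReal (p j * convPow p s (n - j)) := by
      intro j _
      rw [hindep.measure_inter_preimage_eq_mul _ _ (measurableSet_singleton _)
        (measurableSet_singleton _), ih, hdist, ENNReal.ofReal_mul (hp j), mul_comm]
    rw [Finset.sum_congr rfl hterm, ← ENNReal.ofReal_sum_of_nonneg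
      (fun j _ => mul_nonneg (hp j) (convPow_nonneg hp s _)), convPow_succ]

/-- **The compound Poisson process of order `k` (with ℕ-valued compounding variables)
is a compound Poisson process:** `Z(t) = ∑_{i < ∑_{j<N} X j} Y i` has the same
distribution as `D(t) = ∑_{j<M} W j`, where `M` is Poisson with parameter `k λ t` and
the `W j` are i.i.d. with pmf `α j = (1/k) ∑_{m=1}^k q^{*m}(j)`, independent of `M`. -/
theorem cppok_eq_compound_poisson_distribution
    {Ω : Type*} [MeasurableSpace Ω] (P : Measure Ω) [IsProbabilityMeasure P]
    (k : ℕ) (hk : 1 ≤ k) (lam t : ℝ) (hlam : 0 < lam) (ht : 0 < t)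
    (N M : Ω → ℕ) (X Y W : ℕ → Ω → ℕ)
    (hNmeas : Measurable N) (hMmeas : Measurable M)
    (hXmeas : ∀ i, Measurable (X i)) (hYmeas : ∀ i, Measurable (Y i))
    (hWmeas : ∀ j, Measurable (W j))
    (q : ℕ → ℝ) (hq : ∀ n, 0 ≤ q n)
    -- `N` and `M` are Poisson distributed with parameter `k λ t`
    (hNdist : ∀ n : ℕ, P {ω | N ω = n}
      = ENNReal.ofReal (Real.exp (-((k : ℝ) * lam * t)) * ((k : ℝ) * lam * t) ^ n
          / (Nat.factorial n : ℝ)))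
    (hMdist : ∀ n : ℕ, P {ω | M ω = n}
      = ENNReal.ofReal (Real.exp (-((k : ℝ) * lam * t)) * ((k : ℝ) * lam * t) ^ n
          / (Nat.factorial n : ℝ)))
    -- each `X i` is uniformly distributed on `{1, …, k}`
    (hXdist : ∀ i, ∀ m : ℕ,
      P {ω | X i ω = m} = if 1 ≤ m ∧ m ≤ k then ((k : ℝ≥0∞))⁻¹ else 0)
    -- each `Y i` has pmf `q`
    (hYdist : ∀ i, ∀ n : ℕ, P {ω | Y i ω = n} = ENNReal.ofReal (q n))
    -- each `W j` has pmf `α` with `α j = (1/k) ∑_{m=1}^k q^{*m}(j)`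
    (hWdist : ∀ j, ∀ n : ℕ, P {ω | W j ω = n}
      = ENNReal.ofReal ((1 / (k : ℝ)) * ∑ m ∈ Finset.Icc 1 k, convPow q m n))
    -- `N`, `(X i)` and `(Y i)` are mutually independent
    (hindep : iIndepFun
      (Sum.elim (fun _ : Unit => N) (Sum.elim X Y)) P)
    -- `M, W 0, W 1, …` are mutually independent
    (hindep' : iIndepFun
      (fun i : Option ℕ => Option.elim i M W) P) :
    ∀ n : ℕ,
      P {ω | (∑ i ∈ Finset.range (∑ j ∈ Finset.range (N ω), X j ω), Y i ω) = n}
        = P {ω | (∑ j ∈ Finset.range (M ω), W j ω) = n} := by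
  classical
  intro n
  set f : Unit ⊕ (ℕ ⊕ ℕ) → Ω → ℕ := Sum.elim (fun _ : Unit => N) (Sum.elim X Y) with hfdef
  have hfmeas : ∀ i, Measurable (f i) := by
    rintro (u | (i | i))
    · exact hNmeas
    · exact hXmeas i
    · exact hYmeas i
  have hgmeas : ∀ i : Option ℕ, Measurable (Option.elim i M W) := by
    rintro (_ | j)
    · exact hMmeas
    · exact hWmeas j
  -- sub-family independence
  have hXind : iIndepFun X P := by
    have := iIndepFun_precomp (f := f)
      (fun j : ℕ => (Sum.inr (Sum.inl j) : Unit ⊕ (ℕ ⊕ ℕ)))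
      (fun a b h => by simpa using h) hindep
    exact this
  have hYind : iIndepFun Y P := by
    have := iIndepFun_precomp (f := f)
      (fun j : ℕ => (Sum.inr (Sum.inr j) : Unit ⊕ (ℕ ⊕ ℕ)))
      (fun a b h => by simpa using h) hindep
    exact this
  have hWind : iIndepFun W P := by
    have := iIndepFun_precomp (f := fun i : Option ℕ => Option.elim i M W)
      (fun j : ℕ => (some j : Option ℕ))
      (fun a b h => by simpa using h) hindep'
    exact this
  -- pmf facts
  have hkpos : (0 : ℝ) < k := by
    have : (1 : ℕ) ≤ k := hk
    exact_mod_cast Nat.lt_of_lt_of_le Nat.zero_lt_one this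
  have hXpmf : ∀ i m, P (X i ⁻¹' {m}) = ENNReal.ofReal (unifPmf k m) := by
    intro i m
    have : X i ⁻¹' {m} = {ω | X i ω = m} := rfl
    rw [this, hXdist, unifPmf]
    split_ifs with h
    · rw [one_div, ENNReal.ofReal_inv_of_pos hkpos, ENNReal.ofReal_natCast]
    · rw [ENNReal.ofReal_zero]
  have hYpmf : ∀ i m, P (Y i ⁻¹' {m}) = ENNReal.ofReal (q m) := fun i m => hYdist i m
  have hWpmf : ∀ j m, P (W j ⁻¹' {m}) = ENNReal.ofReal (alphaPmf q k m) := fun j m => hWdist j m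
  have hSX := sum_pmf P X hXmeas hXind (unifPmf k) (unifPmf_nonneg k) hXpmf
  have hSY := sum_pmf P Y hYmeas hYind q hq hYpmf
  have hSW := sum_pmf P W hWmeas hWind (alphaPmf q k) (alphaPmf_nonneg hq k) hWpmf
  -- triple factorization
  have hfac : ∀ m s : ℕ,
      P ({ω | N ω = m} ∩ {ω | ∑ j ∈ Finset.range m, X j ω = s}
          ∩ {ω | ∑ i ∈ Finset.range s, Y i ω = n})
        = P {ω | N ω = m}
          * (ENNReal.ofReal (convPow (unifPmf k) m s) * ENNReal.ofReal (convPow q s n)) := by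
    intro m s
    set e₁ : ℕ ↪ Unit ⊕ (ℕ ⊕ ℕ) :=
      ⟨fun j => Sum.inr (Sum.inl j), fun a b h => by simpa using h⟩ with he₁
    set e₂ : ℕ ↪ Unit ⊕ (ℕ ⊕ ℕ) :=
      ⟨fun j => Sum.inr (Sum.inr j), fun a b h => by simpa using h⟩ with he₂
    set S : Finset (Unit ⊕ (ℕ ⊕ ℕ)) := insert (Sum.inl ()) ((Finset.range m).map e₁) with hS
    set T : Finset (Unit ⊕ (ℕ ⊕ ℕ)) := (Finset.range s).map e₂ with hT
    have hdisj : Disjoint S T := by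
      rw [Finset.disjoint_left]
      intro a ha hb
      rw [hT, Finset.mem_map] at hb
      obtain ⟨i, _, rfl⟩ := hb
      rw [hS, Finset.mem_insert, Finset.mem_map] at ha
      rcases ha with h | ⟨j, _, h⟩ <;> simp [he₁, he₂] at h <;> exact Sum.inl_ne_inr (Sum.inr.inj h)
    have base := hindep.indepFun_finset S T hdisj hfmeas
    set φ : ((i : S) → ℕ) → ℕ × ℕ := fun v =>
      (v ⟨Sum.inl (), Finset.mem_insert_self _ _⟩,
        ∑ j ∈ (Finset.range m).attach,
          v ⟨e₁ j.1, Finset.mem_insert_of_mem (Finset.mem_map_of_mem e₁ j.2)⟩) with hφdef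
    set ψ : ((i : T) → ℕ) → ℕ := fun v =>
      ∑ i ∈ (Finset.range s).attach, v ⟨e₂ i.1, Finset.mem_map_of_mem e₂ i.2⟩ with hψdef
    have hφ : Measurable φ :=
      Measurable.prodMk (measurable_pi_apply _)
        (Finset.measurable_sum _ fun j _ => measurable_pi_apply _)
    have hψ : Measurable ψ := Finset.measurable_sum _ fun j _ => measurable_pi_apply _
    have hindep1 := base.comp hφ hψ
    have hcompS : (φ ∘ fun a (i : S) => f i a)
        = fun ω => (N ω, ∑ j ∈ Finset.range m, X j ω) := by
      funext ω
      simp only [Function.comp_apply, hφdef]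
      refine congrArg₂ Prod.mk rfl ?_
      show ∑ j ∈ (Finset.range m).attach, X j.1 ω = ∑ j ∈ Finset.range m, X j ω
      exact Finset.sum_attach (Finset.range m) (fun j => X j ω)
    have hcompT : (ψ ∘ fun a (i : T) => f i a)
        = fun ω => ∑ i ∈ Finset.range s, Y i ω := by
      funext ω
      simp only [Function.comp_apply, hψdef]
      show ∑ i ∈ (Finset.range s).attach, Y i.1 ω = ∑ i ∈ Finset.range s, Y i ω
      exact Finset.sum_attach (Finset.range s) (fun i => Y i ω)
    rw [hcompS, hcompT] at hindep1
    have hAB : {ω | N ω = m} ∩ {ω | ∑ j ∈ Finset.range m, X j ω = s}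
        = (fun ω => (N ω, ∑ j ∈ Finset.range m, X j ω)) ⁻¹' {(m, s)} := by
      ext ω
      simp [Set.mem_preimage, Prod.ext_iff]
    have hC : {ω | ∑ i ∈ Finset.range s, Y i ω = n}
        = (fun ω => ∑ i ∈ Finset.range s, Y i ω) ⁻¹' {n} := rfl
    rw [hAB, hC, hindep1.measure_inter_preimage_eq_mul _ _ (measurableSet_singleton _)
      (measurableSet_singleton _), ← hAB]
    have hNS : IndepFun (fun ω => ∑ j ∈ Finset.range m, X j ω) N P := by
      have h2 := hindep.indepFun_finsetSum_of_notMem hfmeas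
        (s := (Finset.range m).map e₁) (i := Sum.inl ()) (by simp [he₁])
      have heq : (∑ i ∈ (Finset.range m).map e₁, f i)
          = fun ω => ∑ j ∈ Finset.range m, X j ω := by
        funext ω
        rw [Finset.sum_apply, Finset.sum_map]
        rfl
      rwa [heq] at h2
    have hABval : P ({ω | N ω = m} ∩ {ω | ∑ j ∈ Finset.range m, X j ω = s})
        = P {ω | N ω = m} * ENNReal.ofReal (convPow (unifPmf k) m s) := by
      have := hNS.symm.measure_inter_preimage_eq_mul {m} {s}
        (measurableSet_singleton _) (measurableSet_singleton _)
      rw [show {ω | N ω = m} ∩ {ω | ∑ j ∈ Finset.range m, X j ω = s}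
        = N ⁻¹' {m} ∩ (fun ω => ∑ j ∈ Finset.range m, X j ω) ⁻¹' {s} from rfl, this, hSX m s]
      rfl
    rw [hABval, hSY s n]
    ring
  -- LHS decomposition
  have hatom_meas : ∀ p : ℕ × ℕ,
      MeasurableSet ({ω | N ω = p.1} ∩ {ω | ∑ j ∈ Finset.range p.1, X j ω = p.2}
        ∩ {ω | ∑ i ∈ Finset.range p.2, Y i ω = n}) := by
    intro p
    refine MeasurableSet.inter (MeasurableSet.inter ?_ ?_) ?_
    · exact hNmeas (measurableSet_singleton p.1)
    · exact (Finset.measurable_sum _ fun j _ => hXmeas j) (measurableSet_singleton p.2)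
    · exact (Finset.measurable_sum _ fun i _ => hYmeas i) (measurableSet_singleton n)
  have hLset : {ω | (∑ i ∈ Finset.range (∑ j ∈ Finset.range (N ω), X j ω), Y i ω) = n}
      = ⋃ p : ℕ × ℕ, ({ω | N ω = p.1} ∩ {ω | ∑ j ∈ Finset.range p.1, X j ω = p.2}
          ∩ {ω | ∑ i ∈ Finset.range p.2, Y i ω = n}) := by
    ext ω
    simp only [Set.mem_iUnion, Set.mem_inter_iff, Set.mem_setOf_eq]
    constructor
    · intro h
      exact ⟨(N ω, ∑ j ∈ Finset.range (N ω), X j ω), ⟨rfl, rfl⟩, h⟩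
    · rintro ⟨⟨m, s⟩, ⟨h1, h2⟩, h3⟩
      simp only at h1 h2 h3
      subst h1
      rw [h2]
      exact h3
  have hLdisj : Pairwise (Function.onFun Disjoint
      (fun p : ℕ × ℕ => {ω | N ω = p.1} ∩ {ω | ∑ j ∈ Finset.range p.1, X j ω = p.2}
        ∩ {ω | ∑ i ∈ Finset.range p.2, Y i ω = n})) := by
    intro p p' hne
    simp only [Function.onFun]
    apply Set.disjoint_left.mpr
    rintro ω ⟨⟨h1, h2⟩, _⟩ ⟨⟨h1', h2'⟩, _⟩
    simp only [Set.mem_setOf_eq] at h1 h2 h1' h2'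
    apply hne
    have hp1 : p.1 = p'.1 := by rw [← h1, h1']
    have hp2 : p.2 = p'.2 := by rw [← h2, ← h2', hp1]
    exact Prod.ext hp1 hp2
  -- RHS decomposition
  have hRatom_meas : ∀ m : ℕ,
      MeasurableSet ({ω | M ω = m} ∩ {ω | ∑ j ∈ Finset.range m, W j ω = n}) := by
    intro m
    exact (hMmeas (measurableSet_singleton m)).inter
      ((Finset.measurable_sum _ fun j _ => hWmeas j) (measurableSet_singleton n))
  have hRset : {ω | (∑ j ∈ Finset.range (M ω), W j ω) = n}
      = ⋃ m : ℕ, ({ω | M ω = m} ∩ {ω | ∑ j ∈ Finset.range m, W j ω = n}) := by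
    ext ω
    simp only [Set.mem_iUnion, Set.mem_inter_iff, Set.mem_setOf_eq]
    constructor
    · intro h
      exact ⟨M ω, rfl, h⟩
    · rintro ⟨m, h1, h2⟩
      rw [h1]
      exact h2
  have hRdisj : Pairwise (Function.onFun Disjoint
      (fun m : ℕ => {ω | M ω = m} ∩ {ω | ∑ j ∈ Finset.range m, W j ω = n})) := by
    intro m m' hne
    simp only [Function.onFun]
    apply Set.disjoint_left.mpr
    rintro ω ⟨h1, _⟩ ⟨h1', _⟩
    simp only [Set.mem_setOf_eq] at h1 h1'
    exact hne (h1 ▸ h1')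
  have hfacR : ∀ m : ℕ, P ({ω | M ω = m} ∩ {ω | ∑ j ∈ Finset.range m, W j ω = n})
      = P {ω | M ω = m} * ENNReal.ofReal (convPow (alphaPmf q k) m n) := by
    intro m
    have hMS : IndepFun (fun ω => ∑ j ∈ Finset.range m, W j ω) M P := by
      have h2 := hindep'.indepFun_finsetSum_of_notMem hgmeas
        (s := (Finset.range m).map ⟨some, Option.some_injective ℕ⟩) (i := none) (by simp)
      have heq : (∑ i ∈ (Finset.range m).map ⟨some, Option.some_injective ℕ⟩,
            Option.elim i M W) = fun ω => ∑ j ∈ Finset.range m, W j ω := by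
        funext ω
        rw [Finset.sum_apply, Finset.sum_map]
        rfl
      rwa [heq] at h2
    have := hMS.symm.measure_inter_preimage_eq_mul {m} {n}
      (measurableSet_singleton _) (measurableSet_singleton _)
    rw [show {ω | M ω = m} ∩ {ω | ∑ j ∈ Finset.range m, W j ω = n}
      = M ⁻¹' {m} ∩ (fun ω => ∑ j ∈ Finset.range m, W j ω) ⁻¹' {n} from rfl, this, hSW m n]
    rfl
  -- assemble
  rw [hLset, hRset, measure_iUnion hLdisj hatom_meas, measure_iUnion hRdisj hRatom_meas,
    ENNReal.tsum_prod']
  refine tsum_congr fun m => ?_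
  have hinner : ∑' s : ℕ, P ({ω | N ω = m} ∩ {ω | ∑ j ∈ Finset.range m, X j ω = s}
      ∩ {ω | ∑ i ∈ Finset.range s, Y i ω = n})
      = P {ω | N ω = m} * ENNReal.ofReal (convPow (alphaPmf q k) m n) := by
    rw [tsum_congr (fun s => hfac m s), ENNReal.tsum_mul_left]
    congr 1
    rw [tsum_eq_sum (s := Finset.range (k * m + 1)) (fun s hs => by
      rw [convPow_support (unifPmf_support k) m s (by
        rw [Finset.mem_range, not_lt] at hs; omega), ENNReal.ofReal_zero, zero_mul])]
    rw [key_identity k m n, ENNReal.ofReal_sum_of_nonneg (fun s _ =>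
      mul_nonneg (convPow_nonneg (unifPmf_nonneg k) m s) (convPow_nonneg hq s n))]
    refine Finset.sum_congr rfl fun s _ => ?_
    rw [ENNReal.ofReal_mul (convPow_nonneg (unifPmf_nonneg k) m s)]
  rw [hinner, hfacR m, hNdist m, hMdist m]
end
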